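/- arXiv:1106.1299 — 4 statements merged into one kernel-verified Lean document; each statement's English description precedes it below -/
import Mathlib

section
/- For a signature λ of length k with λ_k = 0 and 0 < q < 1, the ratio s_λ(0, q^{-1}, ..., q^{1-k}) / s_λ(1, q^{-1}, ..., q^{1-k}) equals ∏_{i=1}^{k-1} (1 - q^{k-i}) / (1 - q^{λ_i - i + k}), and in particular this ratio is at least ∏_{i=1}^∞ (1 - q^i). -/
open scoped BigOperators
open Finset Matrix

section Helpers

/-- tprod of positive factors ≤ 1 is below any finite partial product. -/
lemma my_tprod_le_prod_finset (f : ℕ → ℝ) (h0 : ∀ n, 0 < f n) (h1 : ∀ n, f n ≤ 1)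
    (s : Finset ℕ) : (∏' n, f n) ≤ ∏ n ∈ s, f n := by
  set g : Finset ℕ → ℝ := fun t => ∏ n ∈ t, f n with hg
  have hant : Antitone g := by
    intro a b hab
    have hsd := Finset.prod_sdiff (f := f) hab
    have h2 : g (b \ a) ≤ 1 := Finset.prod_le_one (fun i _ => (h0 i).le) (fun i _ => h1 i)
    have h3 : 0 < g a := Finset.prod_pos (fun i _ => h0 i)
    calc g b = g (b \ a) * g a := hsd.symm
    _ ≤ 1 * g a := by nlinarith
    _ = g a := one_mul _
  have hbdd : BddBelow (Set.range g) := by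
    refine ⟨0, ?_⟩
    rintro x ⟨t, rfl⟩
    exact (Finset.prod_pos (fun i _ => h0 i)).le
  have hp : HasProd f (⨅ t, g t) := tendsto_atTop_ciInf hant hbdd
  rw [hp.tprod_eq]
  exact ciInf_le hbdd s

lemma my_Ioi_zero_eq (m : ℕ) : Finset.Ioi (0 : Fin (m+1)) = Finset.univ.map (Fin.succEmb m) := by
  ext j
  simp only [mem_Ioi, mem_map, mem_univ, true_and, Fin.coe_succEmb]
  constructor
  · intro h
    exact ⟨j.pred (Fin.pos_iff_ne_zero.mp h), Fin.succ_pred _ _⟩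
  · rintro ⟨k, rfl⟩; exact k.succ_pos

lemma my_Ioi_succ_eq (m : ℕ) (i : Fin m) :
    Finset.Ioi (Fin.succ i) = (Finset.Ioi i).map (Fin.succEmb m) := by
  ext j
  simp only [mem_Ioi, mem_map, Fin.coe_succEmb]
  constructor
  · intro h
    have hj : j ≠ 0 := Fin.pos_iff_ne_zero.mp (lt_trans i.succ_pos h)
    refine ⟨j.pred hj, ?_, Fin.succ_pred _ _⟩
    rw [← Fin.succ_lt_succ_iff, Fin.succ_pred]; exact h
  · rintro ⟨k, hk, rfl⟩; exact Fin.succ_lt_succ_iff.mpr hk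

lemma my_Ioi_castSucc_eq (m : ℕ) (i : Fin m) :
    Finset.Ioi (Fin.castSucc i) =
      insert (Fin.last m) ((Finset.Ioi i).map Fin.castSuccEmb) := by
  ext j
  simp only [mem_Ioi, mem_insert, mem_map, Fin.castSuccEmb_apply]
  constructor
  · intro h
    rcases Fin.eq_castSucc_or_eq_last j with ⟨k, rfl⟩ | hj
    · exact Or.inr ⟨k, Fin.castSucc_lt_castSucc_iff.mp h, rfl⟩
    · exact Or.inl hj
  · rintro (rfl | ⟨k, hk, rfl⟩)
    · exact Fin.castSucc_lt_last i
    · exact Fin.castSucc_lt_castSucc_iff.mpr hk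

/-- split the upper-triangular double product at index 0 -/
lemma my_split_zero (m : ℕ) (f : Fin (m+1) → Fin (m+1) → ℝ) :
    ∏ i : Fin (m+1), ∏ j ∈ Finset.Ioi i, f i j =
      (∏ j : Fin m, f 0 j.succ) *
        ∏ i : Fin m, ∏ j ∈ Finset.Ioi i, f i.succ j.succ := by
  rw [Fin.prod_univ_succ, my_Ioi_zero_eq, Finset.prod_map]
  congr 1
  refine Finset.prod_congr rfl fun i _ => ?_
  rw [my_Ioi_succ_eq, Finset.prod_map]
  rfl

/-- split the upper-triangular double product at the last index -/
lemma my_split_last (m : ℕ) (f : Fin (m+1) → Fin (m+1) → ℝ) :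
    ∏ i : Fin (m+1), ∏ j ∈ Finset.Ioi i, f i j =
      (∏ i : Fin m, f i.castSucc (Fin.last m)) *
        ∏ i : Fin m, ∏ j ∈ Finset.Ioi i, f i.castSucc j.castSucc := by
  rw [Fin.prod_univ_castSucc]
  rw [show Finset.Ioi (Fin.last m) = ∅ by
    simp [Finset.eq_empty_iff_forall_notMem, Fin.le_last]]
  rw [Finset.prod_empty, mul_one, ← Finset.prod_mul_distrib]
  refine Finset.prod_congr rfl fun i _ => ?_
  rw [my_Ioi_castSucc_eq, Finset.prod_insert (by
    simp only [Finset.mem_map, Fin.castSuccEmb_apply]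
    rintro ⟨k, -, hk⟩
    exact (Fin.castSucc_lt_last k).ne hk), Finset.prod_map]
  rfl

lemma my_pow_entry (q : ℝ) (i : ℕ) (n : ℕ) :
    ((q : ℝ) ^ (-(i : ℤ))) ^ ((n : ℕ) : ℤ) = ((q⁻¹) ^ n) ^ i := by
  rw [show ((q:ℝ) ^ (-(i:ℤ))) = (q⁻¹)^(i:ℕ) by
    rw [_root_.zpow_neg, ← _root_.inv_zpow, zpow_natCast]]
  rw [zpow_natCast, ← pow_mul, mul_comm, pow_mul]

lemma my_det_full (m : ℕ) (q : ℝ) (a : Fin (m+1) → ℕ) (e : Fin (m+1) → ℤ)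
    (he : ∀ j, e j = (a j : ℤ)) :
    Matrix.det (Matrix.of fun i j : Fin (m+1) => ((q : ℝ) ^ (-(i : ℤ))) ^ (e j)) =
      ∏ i : Fin (m+1), ∏ j ∈ Finset.Ioi i, ((q⁻¹) ^ (a j) - (q⁻¹) ^ (a i)) := by
  have h : (Matrix.of fun i j : Fin (m+1) => ((q:ℝ) ^ (-(i:ℤ))) ^ (e j))
      = (Matrix.vandermonde fun j => (q⁻¹:ℝ) ^ (a j))ᵀ := by
    ext i j
    simp only [Matrix.transpose_apply, Matrix.vandermonde_apply, Matrix.of_apply]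
    rw [he j]
    exact my_pow_entry q i (a j)
  rw [h, Matrix.det_transpose, Matrix.det_vandermonde]

lemma my_det_zero_col (m : ℕ) (q : ℝ) (a : Fin (m+1) → ℕ) (e : Fin (m+1) → ℤ)
    (he : ∀ j, e j = (a j : ℤ))
    (ha : ∀ j : Fin (m+1), j ≠ Fin.last m → 0 < a j) (hal : a (Fin.last m) = 0) :
    Matrix.det (Matrix.of fun i j : Fin (m+1) =>
        (if (i : Fin (m+1)) = 0 then (0:ℝ) else q ^ (-(i : ℤ))) ^ (e j)) =
      (-1)^m * ((∏ j : Fin m, (q⁻¹:ℝ) ^ (a j.castSucc)) *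
        ∏ i : Fin m, ∏ j ∈ Finset.Ioi i, ((q⁻¹) ^ (a j.castSucc) - (q⁻¹) ^ (a i.castSucc))) := by
  rw [Matrix.det_succ_row_zero]
  rw [Finset.sum_eq_single (Fin.last m)]
  · have h0 : (Matrix.of fun i j : Fin (m+1) =>
        (if (i : Fin (m+1)) = 0 then (0:ℝ) else q ^ (-(i : ℤ))) ^ (e j)) 0 (Fin.last m)
        = 1 := by
      simp [he, hal]
    rw [h0, mul_one, Fin.val_last, Fin.succAbove_last]
    congr 1
    have h : (Matrix.of fun i j : Fin (m+1) =>
          (if (i : Fin (m+1)) = 0 then (0:ℝ) else q ^ (-(i : ℤ))) ^ (e j)).submatrix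
          Fin.succ Fin.castSucc
        = Matrix.of fun i j : Fin m => ((q⁻¹:ℝ) ^ (a j.castSucc)) *
            ((Matrix.vandermonde fun j : Fin m => (q⁻¹:ℝ) ^ (a j.castSucc))ᵀ i j) := by
      ext i j
      simp only [Matrix.submatrix_apply, Matrix.of_apply, Matrix.transpose_apply,
        Matrix.vandermonde_apply]
      rw [if_neg (Fin.succ_ne_zero i), he, my_pow_entry q (i.succ : ℕ) (a j.castSucc)]
      rw [Fin.val_succ, pow_succ, mul_comm]
    rw [h, Matrix.det_mul_row, Matrix.det_transpose, Matrix.det_vandermonde]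
  · intro b _ hb
    have : (Matrix.of fun i j : Fin (m+1) =>
        (if (i : Fin (m+1)) = 0 then (0:ℝ) else q ^ (-(i : ℤ))) ^ (e j)) 0 b = 0 := by
      simp only [Matrix.of_apply, if_pos rfl]
      rw [he]
      exact zero_zpow _ (by exact_mod_cast (ha b hb).ne')
    rw [this, mul_zero, zero_mul]
  · intro h; exact absurd (Finset.mem_univ _) h

lemma my_filter_lt (n : ℕ) (i : Fin n) :
    Finset.univ.filter (fun j => i < j) = Finset.Ioi i := by
  ext j; simp

end Helpers

/-- The rational Schur function `s_λ(x₁,…,x_k)` (indices 0-based). -/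
noncomputable def schurR (N : ℕ) (l : Fin N → ℤ) (x : Fin N → ℝ) : ℝ :=
  Matrix.det (Matrix.of fun i j : Fin N => x i ^ (l j + (N : ℤ) - 1 - (j : ℤ))) /
    ∏ i : Fin N, ∏ j ∈ Finset.univ.filter (fun j => i < j), (x i - x j)

set_option maxHeartbeats 2000000 in
/-- For a signature `λ` of length `k = m+1` with last coordinate `0` and `0<q<1`,
`s_λ(0,q⁻¹,…,q^{1-k}) / s_λ(1,q⁻¹,…,q^{1-k})
  = ∏_{i=1}^{k-1} (1-q^{k-i})/(1-q^{λ_i-i+k})`, and this ratio is at least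
`∏_{i=1}^∞ (1-q^i)`. -/
theorem stmt5 (m : ℕ) (q : ℝ) (hq0 : 0 < q) (hq1 : q < 1)
    (l : Fin (m + 1) → ℤ) (hl : Antitone l) (hlast : l (Fin.last m) = 0) :
    schurR (m + 1) l (fun i => if i = 0 then 0 else q ^ (-(i : ℤ))) /
        schurR (m + 1) l (fun i => q ^ (-(i : ℤ))) =
      ∏ i ∈ Finset.univ.filter (fun i : Fin (m + 1) => (i : ℕ) + 1 < m + 1),
        (1 - q ^ ((m : ℤ) - (i : ℤ))) / (1 - q ^ (l i + (m : ℤ) - (i : ℤ))) ∧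
    (∏' n : ℕ, (1 - q ^ (n + 1))) ≤
      schurR (m + 1) l (fun i => if i = 0 then 0 else q ^ (-(i : ℤ))) /
        schurR (m + 1) l (fun i => q ^ (-(i : ℤ))) := by
  have hq : q ≠ 0 := hq0.ne'
  have hqi : (1:ℝ) < q⁻¹ := (one_lt_inv₀ hq0).mpr hq1
  have hqi0 : (0:ℝ) < q⁻¹ := inv_pos.mpr hq0
  set a : Fin (m+1) → ℕ := fun j => (l j + (m:ℤ) - (j:ℤ)).toNat with ha_def
  have hl0 : ∀ j, 0 ≤ l j := fun j => hlast ▸ hl (Fin.le_last j)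
  have hacast : ∀ j : Fin (m+1), ((a j : ℤ)) = l j + (m:ℤ) - (j:ℤ) := by
    intro j
    have h1 := hl0 j
    have h2 : (j:ℕ) ≤ m := Fin.is_le j
    simp only [ha_def]
    omega
  have haanti : ∀ i j : Fin (m+1), i < j → a j < a i := by
    intro i j hij
    have h1 : l j ≤ l i := hl hij.le
    have h2 : (i:ℕ) < (j:ℕ) := hij
    have h3 := hacast i
    have h4 := hacast j
    omega
  have hal : a (Fin.last m) = 0 := by
    have h := hacast (Fin.last m)
    rw [hlast, Fin.val_last] at h
    omega
  have hapos : ∀ j : Fin (m+1), j ≠ Fin.last m → 0 < a j := by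
    intro j hj
    have := haanti j (Fin.last m) (lt_of_le_of_ne (Fin.le_last j) hj)
    omega
  have hacs1 : ∀ k : Fin m, 1 ≤ a k.castSucc := by
    intro k
    exact hapos k.castSucc (Fin.ne_of_lt (Fin.castSucc_lt_last k))
  have hexp : ∀ j : Fin (m+1), l j + ((m+1 : ℕ) : ℤ) - 1 - (j:ℤ) = ((a j : ℕ) : ℤ) := by
    intro j
    rw [hacast]
    push_cast
    ring
  -- basic power facts
  have hw : ∀ i : Fin (m+1), q ^ (-(i:ℤ)) = (q⁻¹)^(i:ℕ) := by
    intro i; rw [_root_.zpow_neg, ← _root_.inv_zpow, zpow_natCast]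
  have hmono : StrictMono (fun n : ℕ => (q⁻¹:ℝ) ^ n) :=
    fun s t hst => pow_lt_pow_right₀ hqi hst
  have hc : ∀ n : ℕ, (q:ℝ)^n * (q⁻¹)^n = 1 := fun n => by
    rw [← mul_pow, mul_inv_cancel₀ hq, one_pow]
  have hpowlt : ∀ n : ℕ, 1 ≤ n → q ^ n < 1 := fun n hn =>
    pow_lt_one₀ hq0.le hq1 (by omega)
  -- denominator computations
  have hV1 : ∏ i : Fin (m+1), ∏ j ∈ Finset.Ioi i, (q ^ (-(i:ℤ)) - q ^ (-(j:ℤ))) =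
      (∏ i : Fin (m+1), ∏ j ∈ Finset.Ioi i, (-1:ℝ)) *
      ((∏ i : Fin m, ((q⁻¹:ℝ)^((i:ℕ)+1) - 1)) *
        ∏ i : Fin m, ∏ j ∈ Finset.Ioi i, ((q⁻¹:ℝ)^((j:ℕ)+1) - (q⁻¹)^((i:ℕ)+1))) := by
    have step : ∀ i : Fin (m+1), ∀ j ∈ Finset.Ioi i,
        q ^ (-(i:ℤ)) - q ^ (-(j:ℤ)) = (-1:ℝ) * ((q⁻¹)^(j:ℕ) - (q⁻¹)^(i:ℕ)) := by
      intro i j _; rw [hw, hw]; ring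
    calc ∏ i : Fin (m+1), ∏ j ∈ Finset.Ioi i, (q ^ (-(i:ℤ)) - q ^ (-(j:ℤ)))
        = ∏ i : Fin (m+1), ∏ j ∈ Finset.Ioi i,
            ((-1:ℝ) * ((q⁻¹)^(j:ℕ) - (q⁻¹)^(i:ℕ))) :=
          Finset.prod_congr rfl fun i _ => Finset.prod_congr rfl fun j hj => step i j hj
      _ = (∏ i : Fin (m+1), ∏ j ∈ Finset.Ioi i, (-1:ℝ)) *
            ∏ i : Fin (m+1), ∏ j ∈ Finset.Ioi i, ((q⁻¹:ℝ)^(j:ℕ) - (q⁻¹)^(i:ℕ)) := by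
          simp_rw [Finset.prod_mul_distrib]
      _ = _ := by
          rw [my_split_zero m (fun i j => (q⁻¹:ℝ)^(j:ℕ) - (q⁻¹)^(i:ℕ))]
          simp [Fin.val_succ]
  have hV0 : ∏ i : Fin (m+1), ∏ j ∈ Finset.Ioi i,
      ((if i = 0 then (0:ℝ) else q ^ (-(i:ℤ))) - (if j = 0 then (0:ℝ) else q ^ (-(j:ℤ)))) =
      (∏ i : Fin (m+1), ∏ j ∈ Finset.Ioi i, (-1:ℝ)) *
      ((∏ i : Fin m, (q⁻¹:ℝ)^((i:ℕ)+1)) *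
        ∏ i : Fin m, ∏ j ∈ Finset.Ioi i, ((q⁻¹:ℝ)^((j:ℕ)+1) - (q⁻¹)^((i:ℕ)+1))) := by
    have step : ∀ i : Fin (m+1), ∀ j ∈ Finset.Ioi i,
        (if i = 0 then (0:ℝ) else q ^ (-(i:ℤ))) - (if j = 0 then (0:ℝ) else q ^ (-(j:ℤ))) =
          (-1:ℝ) * ((if j = 0 then (0:ℝ) else (q⁻¹)^(j:ℕ)) -
            (if i = 0 then (0:ℝ) else (q⁻¹)^(i:ℕ))) := by
      intro i j _
      simp only [hw]
      ring
    calc ∏ i : Fin (m+1), ∏ j ∈ Finset.Ioi i,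
          ((if i = 0 then (0:ℝ) else q ^ (-(i:ℤ))) - (if j = 0 then (0:ℝ) else q ^ (-(j:ℤ))))
        = ∏ i : Fin (m+1), ∏ j ∈ Finset.Ioi i,
            ((-1:ℝ) * ((if j = 0 then (0:ℝ) else (q⁻¹)^(j:ℕ)) -
              (if i = 0 then (0:ℝ) else (q⁻¹)^(i:ℕ)))) :=
          Finset.prod_congr rfl fun i _ => Finset.prod_congr rfl fun j hj => step i j hj
      _ = (∏ i : Fin (m+1), ∏ j ∈ Finset.Ioi i, (-1:ℝ)) *
            ∏ i : Fin (m+1), ∏ j ∈ Finset.Ioi i,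
              ((if j = 0 then (0:ℝ) else (q⁻¹)^(j:ℕ)) -
                (if i = 0 then (0:ℝ) else (q⁻¹)^(i:ℕ))) := by
          simp_rw [Finset.prod_mul_distrib]
      _ = _ := by
          rw [my_split_zero m (fun i j => (if j = 0 then (0:ℝ) else (q⁻¹)^(j:ℕ)) -
            (if i = 0 then (0:ℝ) else (q⁻¹)^(i:ℕ)))]
          simp [Fin.succ_ne_zero, Fin.val_succ]
  -- determinant split
  have hD1 : ∏ i : Fin (m+1), ∏ j ∈ Finset.Ioi i, ((q⁻¹:ℝ)^(a j) - (q⁻¹)^(a i)) =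
      (∏ i : Fin m, (1 - (q⁻¹:ℝ)^(a i.castSucc))) *
        ∏ i : Fin m, ∏ j ∈ Finset.Ioi i, ((q⁻¹:ℝ)^(a j.castSucc) - (q⁻¹)^(a i.castSucc)) := by
    rw [my_split_last m (fun i j => (q⁻¹:ℝ)^(a j) - (q⁻¹)^(a i))]
    simp [hal]
  -- nonvanishing facts
  have hm1 : ((-1:ℝ))^m ≠ 0 := pow_ne_zero _ (by norm_num)
  have hε0 : (∏ i : Fin (m+1), ∏ j ∈ Finset.Ioi i, (-1:ℝ)) ≠ 0 :=
    Finset.prod_ne_zero_iff.mpr fun i _ =>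
      Finset.prod_ne_zero_iff.mpr fun j _ => by norm_num
  have hP0 : (∏ i : Fin m, ∏ j ∈ Finset.Ioi i,
      ((q⁻¹:ℝ)^(a j.castSucc) - (q⁻¹)^(a i.castSucc))) ≠ 0 := by
    refine Finset.prod_ne_zero_iff.mpr fun i _ =>
      Finset.prod_ne_zero_iff.mpr fun j hj => ?_
    have hij : a j.castSucc < a i.castSucc :=
      haanti _ _ (Fin.castSucc_lt_castSucc_iff.mpr (Finset.mem_Ioi.mp hj))
    exact sub_ne_zero.mpr (ne_of_lt (hmono hij))
  have hW'0 : (∏ i : Fin m, ∏ j ∈ Finset.Ioi i,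
      ((q⁻¹:ℝ)^((j:ℕ)+1) - (q⁻¹)^((i:ℕ)+1))) ≠ 0 := by
    refine Finset.prod_ne_zero_iff.mpr fun i _ =>
      Finset.prod_ne_zero_iff.mpr fun j hj => ?_
    have hij : (i:ℕ) + 1 < (j:ℕ) + 1 := by
      have := Finset.mem_Ioi.mp hj
      exact Nat.succ_lt_succ this
    exact sub_ne_zero.mpr (ne_of_gt (hmono hij))
  have hZ0 : (∏ j : Fin m, (q⁻¹:ℝ)^(a j.castSucc)) ≠ 0 :=
    Finset.prod_ne_zero_iff.mpr fun j _ => pow_ne_zero _ (inv_ne_zero hq)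
  have hWp0 : (∏ i : Fin m, (q⁻¹:ℝ)^((i:ℕ)+1)) ≠ 0 :=
    Finset.prod_ne_zero_iff.mpr fun j _ => pow_ne_zero _ (inv_ne_zero hq)
  have hBpos : ∀ k : Fin m, 0 < 1 - q ^ (a k.castSucc) := fun k => by
    have := hpowlt _ (hacs1 k); linarith
  have hB0 : (∏ k : Fin m, (1 - q^(a k.castSucc))) ≠ 0 :=
    Finset.prod_ne_zero_iff.mpr fun k _ => (hBpos k).ne'
  have hCpos : ∀ k : Fin m, 0 < 1 - q ^ ((k:ℕ)+1) := fun k => by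
    have := hpowlt ((k:ℕ)+1) (by omega); linarith
  have hC0 : (∏ k : Fin m, (1 - q^((k:ℕ)+1))) ≠ 0 :=
    Finset.prod_ne_zero_iff.mpr fun k _ => (hCpos k).ne'
  -- rewriting the 1 - q⁻¹ powers
  have hQ1eq : (∏ i : Fin m, (1 - (q⁻¹:ℝ)^(a i.castSucc))) =
      ((-1:ℝ))^m * ((∏ k : Fin m, (1 - q^(a k.castSucc))) *
        (∏ j : Fin m, (q⁻¹:ℝ)^(a j.castSucc))) := by
    calc (∏ i : Fin m, (1 - (q⁻¹:ℝ)^(a i.castSucc)))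
        = ∏ i : Fin m, ((-1:ℝ) * ((1 - q^(a i.castSucc)) * (q⁻¹)^(a i.castSucc))) := by
          refine Finset.prod_congr rfl fun i _ => ?_
          have h := hc (a i.castSucc)
          nlinarith [h]
      _ = ((-1:ℝ))^m * ((∏ k : Fin m, (1 - q^(a k.castSucc))) *
            (∏ j : Fin m, (q⁻¹:ℝ)^(a j.castSucc))) := by
          rw [Finset.prod_mul_distrib, Finset.prod_mul_distrib, Finset.prod_const,
            Finset.card_univ, Fintype.card_fin]
  have hW1eq : (∏ i : Fin m, ((q⁻¹:ℝ)^((i:ℕ)+1) - 1)) =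
      (∏ k : Fin m, (1 - q^((k:ℕ)+1))) * (∏ i : Fin m, (q⁻¹:ℝ)^((i:ℕ)+1)) := by
    rw [← Finset.prod_mul_distrib]
    refine Finset.prod_congr rfl fun i _ => ?_
    have h := hc ((i:ℕ)+1)
    nlinarith [h]
  -- the right-hand side as a quotient
  have hfilter : (Finset.univ.filter (fun i : Fin (m+1) => (i:ℕ)+1 < m+1)) =
      Finset.univ.map Fin.castSuccEmb := by
    ext j
    simp only [Finset.mem_filter, Finset.mem_univ, true_and, Finset.mem_map,
      Fin.castSuccEmb_apply]
    constructor
    · intro hj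
      exact ⟨⟨j, by omega⟩, by ext; simp⟩
    · rintro ⟨k, rfl⟩
      simp
  have hRHS : (∏ i ∈ Finset.univ.filter (fun i : Fin (m + 1) => (i : ℕ) + 1 < m + 1),
        ((1 - q ^ ((m : ℤ) - (i : ℤ))) / (1 - q ^ (l i + (m : ℤ) - (i : ℤ))))) =
      (∏ k : Fin m, (1 - q^(m - (k:ℕ)))) / (∏ k : Fin m, (1 - q^(a k.castSucc))) := by
    rw [hfilter, Finset.prod_map, ← Finset.prod_div_distrib]
    refine Finset.prod_congr rfl fun k _ => ?_
    have hk : (k:ℕ) < m := k.isLt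
    show (1 - q ^ ((m:ℤ) - ((Fin.castSucc k : Fin (m+1)) : ℤ))) /
        (1 - q ^ (l (Fin.castSucc k) + (m:ℤ) - ((Fin.castSucc k : Fin (m+1)) : ℤ))) =
      (1 - q ^ (m - (k:ℕ))) / (1 - q ^ (a k.castSucc))
    simp only [Fin.coe_castSucc]
    have h1 : (m:ℤ) - ((k:ℕ):ℤ) = ((m - (k:ℕ) : ℕ) : ℤ) := by omega
    have h2 : l (Fin.castSucc k) + (m:ℤ) - ((k:ℕ):ℤ) = ((a (Fin.castSucc k) : ℕ) : ℤ) := by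
      rw [hacast]
      simp
    rw [h1, h2, zpow_natCast, zpow_natCast]
  have hAC : (∏ k : Fin m, (1 - q^(m - (k:ℕ)))) = ∏ k : Fin m, (1 - q^((k:ℕ)+1)) := by
    rw [Fin.prod_univ_eq_prod_range (fun k => 1 - q^(m - k)) m,
      Fin.prod_univ_eq_prod_range (fun k => 1 - q^(k+1)) m,
      ← Finset.prod_range_reflect (fun j => 1 - q^(j+1)) m]
    refine Finset.prod_congr rfl fun j hj => ?_
    rw [Finset.mem_range] at hj
    congr 2
    omega
  -- the key identity
  have key : schurR (m + 1) l (fun i => if i = 0 then 0 else q ^ (-(i : ℤ))) /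
        schurR (m + 1) l (fun i => q ^ (-(i : ℤ))) =
      (∏ k : Fin m, (1 - q^(m - (k:ℕ)))) / (∏ k : Fin m, (1 - q^(a k.castSucc))) := by
    simp only [schurR, my_filter_lt]
    rw [my_det_zero_col m q a (fun j => l j + ((m+1 : ℕ) : ℤ) - 1 - (j:ℤ)) hexp hapos hal,
      my_det_full m q a (fun j => l j + ((m+1 : ℕ) : ℤ) - 1 - (j:ℤ)) hexp,
      hD1, hV1, hV0, hQ1eq, hW1eq, hAC]
    set P := ∏ i : Fin m, ∏ j ∈ Finset.Ioi i, ((q⁻¹:ℝ)^(a j.castSucc) - (q⁻¹)^(a i.castSucc)) with hPv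
    set W := ∏ i : Fin m, ∏ j ∈ Finset.Ioi i, ((q⁻¹:ℝ)^((j:ℕ)+1) - (q⁻¹)^((i:ℕ)+1)) with hWv
    set Z := ∏ j : Fin m, (q⁻¹:ℝ)^(a j.castSucc) with hZv
    set Wp := ∏ i : Fin m, (q⁻¹:ℝ)^((i:ℕ)+1) with hWpv
    set E := ∏ i : Fin (m+1), ∏ j ∈ Finset.Ioi i, (-1:ℝ) with hEv
    set B := ∏ k : Fin m, (1 - q^(a k.castSucc)) with hBv
    set C := ∏ k : Fin m, (1 - q^((k:ℕ)+1)) with hCv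
    rw [div_div_div_eq]
    have hden : E * (Wp * W) * ((-1:ℝ)^m * (B * Z) * P) ≠ 0 :=
      mul_ne_zero (mul_ne_zero hε0 (mul_ne_zero hWp0 hW'0))
        (mul_ne_zero (mul_ne_zero hm1 (mul_ne_zero hB0 hZ0)) hP0)
    rw [div_eq_div_iff hden hB0]
    ring
  refine ⟨?_, ?_⟩
  · rw [key, hRHS]
  · rw [key]
    calc (∏' n : ℕ, (1 - q ^ (n + 1)))
        ≤ ∏ n ∈ Finset.range m, (1 - q ^ (n + 1)) := by
          refine my_tprod_le_prod_finset _ (fun n => ?_) (fun n => ?_) _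
          · have := hpowlt (n+1) (by omega); linarith
          · have : (0:ℝ) ≤ q ^ (n+1) := pow_nonneg hq0.le _
            linarith
      _ = ∏ k : Fin m, (1 - q^((k:ℕ)+1)) := by
          rw [Fin.prod_univ_eq_prod_range (fun k => 1 - q^(k+1)) m]
      _ = ∏ k : Fin m, (1 - q^(m - (k:ℕ))) := hAC.symm
      _ ≤ (∏ k : Fin m, (1 - q^(m - (k:ℕ)))) / (∏ k : Fin m, (1 - q^(a k.castSucc))) := by
          rw [← Finset.prod_div_distrib]
          refine Finset.prod_le_prod (fun k _ => ?_) (fun k _ => ?_)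
          · have := hpowlt (m - (k:ℕ)) (by have := k.isLt; omega)
            linarith
          · rw [le_div_iff₀ (hBpos k)]
            have h1 : 0 < 1 - q^(m - (k:ℕ)) := by
              have := hpowlt (m - (k:ℕ)) (by have := k.isLt; omega); linarith
            have h2 : 1 - q^(a k.castSucc) ≤ 1 := by
              have : (0:ℝ) ≤ q ^ (a k.castSucc) := pow_nonneg hq0.le _
              linarith
            nlinarith
end

section
/- Let μ and λ be signatures of lengths N-1 and N respectively with interlacing μ ≺ λ (i.e. λ_{i+1} ≤ μ_i ≤ λ_i for all i), and let ξ₁,...,ξ_N be distinct positive reals. Then the quantities P(λ→μ) = ξ_N^{|λ|-|μ|} · det[ξ_i^{μ_j+N-1-j}]_{i,j=1}^{N-1} / det[ξ_i^{λ_j+N-j}]_{i,j=1}^{N} · ∏_{i=1}^{N-1}(ξ_i - ξ_N), extended by 0 when μ does not interlace λ, are nonnegative and sum to 1 over all μ of length N-1: ∑_{μ ≺ λ} P(λ→μ) = 1. -/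
open scoped BigOperators Classical

open Finset Matrix

-- generalized power-sum lemma
lemma zpow_fsum {α : Type*} (x : ℝ) (hx : x ≠ 0) (s : Finset α) (f : α → ℤ) :
    x ^ (∑ j ∈ s, f j) = ∏ j ∈ s, x ^ f j := by
  classical
  induction s using Finset.induction with
  | empty => simp
  | insert _ _ h ih => rw [Finset.sum_insert h, Finset.prod_insert h, zpow_add₀ hx, ih]

lemma geom_aux (x y : ℝ) (hx : x ≠ 0) (hy : y ≠ 0) :
    ∀ (n : ℕ) (a : ℤ), (x - y) * ∑ v ∈ Finset.Icc a (a + (n:ℤ)), y ^ (a + (n:ℤ) - v) * x ^ v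
      = x ^ (a + (n:ℤ) + 1) - y ^ ((n:ℤ) + 1) * x ^ a := by
  intro n
  induction n with
  | zero =>
    intro a
    simp only [Nat.cast_zero, add_zero, Finset.Icc_self, Finset.sum_singleton, sub_self,
      zpow_zero, one_mul, zero_add, zpow_one]
    rw [zpow_add_one₀ hx]
    ring
  | succ n ih =>
    intro a
    have hins : Finset.Icc a (a + ((n:ℤ)+1)) = insert (a + (n:ℤ) + 1) (Finset.Icc a (a + (n:ℤ))) := by
      ext v
      simp only [Finset.mem_Icc, Finset.mem_insert]
      omega
    have hnot : (a + (n:ℤ) + 1) ∉ Finset.Icc a (a + (n:ℤ)) := by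
      simp only [Finset.mem_Icc]; omega
    push_cast
    rw [show a + ((n:ℤ)+1) = a + (n:ℤ) + 1 by ring] at *
    rw [hins, Finset.sum_insert hnot]
    have h2 : ∀ v ∈ Finset.Icc a (a + (n:ℤ)),
        y ^ (a + (n:ℤ) + 1 - v) * x ^ v = y * (y ^ (a + (n:ℤ) - v) * x ^ v) := by
      intro v _
      rw [show a + (n:ℤ) + 1 - v = (a + (n:ℤ) - v) + 1 by ring, zpow_add_one₀ hy]
      ring
    rw [Finset.sum_congr rfl h2, ← Finset.mul_sum, sub_self, zpow_zero, one_mul,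
      mul_add, mul_left_comm, ih a]
    have e1 : x ^ (a + (n:ℤ) + 1 + 1) = x ^ (a + (n:ℤ) + 1) * x := zpow_add_one₀ hx _
    have e2 : y ^ ((n:ℤ) + 1 + 1) = y ^ ((n:ℤ) + 1) * y := zpow_add_one₀ hy _
    rw [e1, e2]
    ring

lemma geom_sum (x y : ℝ) (hx : x ≠ 0) (hy : y ≠ 0) (hxy : x - y ≠ 0) (a b c : ℤ) (hab : a ≤ b) :
    ∑ v ∈ Finset.Icc a b, y ^ (b - v) * x ^ (v + c)
      = (x ^ (b + 1 + c) - y ^ (b - a + 1) * x ^ (a + c)) * (x - y)⁻¹ := by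
  have hb : b = a + ((b - a).toNat : ℤ) := by omega
  rw [eq_mul_inv_iff_mul_eq₀ hxy, mul_comm]
  have key := geom_aux x y hx hy (b - a).toNat a
  rw [← hb] at key
  have he : ((b - a).toNat : ℤ) + 1 = b - a + 1 := by omega
  rw [he] at key
  calc (x - y) * ∑ v ∈ Finset.Icc a b, y ^ (b - v) * x ^ (v + c)
      = ((x - y) * ∑ v ∈ Finset.Icc a b, y ^ (b - v) * x ^ v) * x ^ c := by
        rw [mul_assoc, Finset.sum_mul]
        congr 1
        refine Finset.sum_congr rfl fun v _ => ?_
        rw [zpow_add₀ hx]; ring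
    _ = (x ^ (b + 1) - y ^ (b - a + 1) * x ^ a) * x ^ c := by rw [key]
    _ = x ^ (b + 1 + c) - y ^ (b - a + 1) * x ^ (a + c) := by
        simp only [zpow_add₀ hx, zpow_one]; ring

noncomputable def Dm (n : ℕ) (x : Fin n → ℝ) (l : Fin n → ℤ) : Matrix (Fin n) (Fin n) ℝ :=
  Matrix.of fun i j => x i ^ (l j + (n : ℤ) - 1 - (j : ℤ))

noncomputable def Vd (n : ℕ) (x : Fin n → ℝ) : ℝ := ∏ i, ∏ j ∈ Finset.Ioi i, (x i - x j)

lemma Ioi_castSucc' {n : ℕ} (i : Fin n) :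
    Finset.Ioi (Fin.castSucc i) = insert (Fin.last n) ((Finset.Ioi i).map Fin.castSuccEmb) := by
  ext j
  simp only [Finset.mem_Ioi, Finset.mem_insert, Finset.mem_map, Fin.castSuccEmb,
    Function.Embedding.coeFn_mk]
  constructor
  · intro hij
    rcases eq_or_ne j (Fin.last n) with h | h
    · exact Or.inl h
    · refine Or.inr ⟨⟨(j : ℕ), ?_⟩, ?_, ?_⟩
      · have := j.isLt
        have hne : (j : ℕ) ≠ n := fun hc => h (Fin.ext hc)
        omega
      · rw [Fin.lt_def] at hij ⊢
        simpa using hij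
      · apply Fin.ext; simp
  · rintro (h | ⟨k, hk, rfl⟩)
    · subst h
      rw [Fin.lt_def]
      simp only [Fin.coe_castSucc, Fin.val_last]
      exact i.isLt
    · exact hk

lemma Vd_split (n : ℕ) (ξ : Fin (n + 1) → ℝ) :
    Vd (n + 1) ξ =
      Vd n (fun i => ξ i.castSucc) * ∏ i : Fin n, (ξ i.castSucc - ξ (Fin.last n)) := by
  unfold Vd
  rw [Fin.prod_univ_castSucc]
  have hlast : Finset.Ioi (Fin.last n) = (∅ : Finset (Fin (n+1))) := by
    ext j
    simp only [Finset.mem_Ioi, Finset.notMem_empty, iff_false, not_lt]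
    exact Fin.le_last j
  rw [hlast, Finset.prod_empty, mul_one]
  rw [← Finset.prod_mul_distrib]
  refine Finset.prod_congr rfl fun i _ => ?_
  rw [Ioi_castSucc', Finset.prod_insert, Finset.prod_map]
  · rw [mul_comm]; rfl
  · simp only [Finset.mem_map, Fin.castSuccEmb, Function.Embedding.coeFn_mk]
    rintro ⟨k, _, hk⟩
    exact absurd (congrArg Fin.val hk) (by simp [Fin.val_last]; omega)

lemma Vd_ne_zero (n : ℕ) (ξ : Fin n → ℝ) (hinj : Function.Injective ξ) : Vd n ξ ≠ 0 := by
  unfold Vd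
  apply Finset.prod_ne_zero_iff.mpr
  intro i _
  apply Finset.prod_ne_zero_iff.mpr
  intro j hj
  rw [Finset.mem_Ioi] at hj
  exact sub_ne_zero_of_ne (fun h => absurd (hinj h) (ne_of_lt hj))

lemma detM_eq (n : ℕ) (ξ : Fin (n + 1) → ℝ) (hpos : ∀ i, 0 < ξ i) (e : Fin (n + 1) → ℤ) :
    (Matrix.of fun j i : Fin (n + 1) => ξ i ^ e j).det
      = ξ (Fin.last n) ^ e (Fin.last n) *
        (Matrix.of fun j i : Fin n => ξ i.castSucc ^ e j.castSucc
          - ξ (Fin.last n) ^ (e j.castSucc - e j.succ) * ξ i.castSucc ^ e j.succ).det := by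
  have hy : ξ (Fin.last n) ≠ 0 := ne_of_gt (hpos _)
  set y := ξ (Fin.last n) with hydef
  set L : Matrix (Fin (n + 1)) (Fin (n + 1)) ℝ :=
    Matrix.of fun j k => (if k = j then (1 : ℝ) else 0) +
      (if (k : ℕ) = (j : ℕ) + 1 then -(y ^ (e j - e k)) else 0) with hLdef
  set M : Matrix (Fin (n + 1)) (Fin (n + 1)) ℝ := Matrix.of fun j i => ξ i ^ e j with hMdef
  have hdetL : L.det = 1 := by
    have ht : L.BlockTriangular id := by
      intro j k hkj
      have h1 : ¬(k = j) := ne_of_lt hkj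
      have h2 : ¬((k : ℕ) = (j : ℕ) + 1) := by
        have : (k : ℕ) < (j : ℕ) := hkj
        omega
      simp [hLdef, h1, h2]
    rw [Matrix.det_of_upperTriangular ht]
    apply Finset.prod_eq_one
    intro j _
    simp only [hLdef, Matrix.of_apply]
    rw [if_neg (show ¬((j : ℕ) = (j : ℕ) + 1) by omega)]
    simp
  have hmul : ∀ (j' : Fin n) (i : Fin (n + 1)),
      (L * M) j'.castSucc i
        = ξ i ^ e j'.castSucc - y ^ (e j'.castSucc - e j'.succ) * ξ i ^ e j'.succ := by
    intro j' i
    rw [Matrix.mul_apply]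
    simp only [hLdef, hMdef, Matrix.of_apply, add_mul, Finset.sum_add_distrib]
    have hc : ∀ k : Fin (n + 1),
        ((k : ℕ) = ((j'.castSucc : Fin (n + 1)) : ℕ) + 1) = (k = j'.succ) := by
      intro k
      simp only [Fin.coe_castSucc, eq_iff_iff]
      rw [Fin.ext_iff, Fin.val_succ]
    have s1 : ∑ k : Fin (n + 1), (if k = j'.castSucc then (1 : ℝ) else 0) * ξ i ^ e k
        = ξ i ^ e j'.castSucc := by
      simp [ite_mul, Finset.sum_ite_eq']
    have s2 : ∑ k : Fin (n + 1),
        (if (k : ℕ) = ((j'.castSucc : Fin (n + 1)) : ℕ) + 1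
          then -(y ^ (e j'.castSucc - e k)) else 0) * ξ i ^ e k
        = -(y ^ (e j'.castSucc - e j'.succ)) * ξ i ^ e j'.succ := by
      simp_rw [hc]
      simp [ite_mul, Finset.sum_ite_eq']
    rw [s1, s2]
    ring
  have hlastrow : ∀ i : Fin (n + 1), (L * M) (Fin.last n) i = ξ i ^ e (Fin.last n) := by
    intro i
    rw [Matrix.mul_apply]
    simp only [hLdef, hMdef, Matrix.of_apply, add_mul, Finset.sum_add_distrib]
    have s1 : ∑ k : Fin (n + 1), (if k = Fin.last n then (1 : ℝ) else 0) * ξ i ^ e k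
        = ξ i ^ e (Fin.last n) := by
      simp [ite_mul, Finset.sum_ite_eq']
    have s2 : ∑ k : Fin (n + 1),
        (if (k : ℕ) = ((Fin.last n : Fin (n + 1)) : ℕ) + 1
          then -(y ^ (e (Fin.last n) - e k)) else 0) * ξ i ^ e k = 0 := by
      apply Finset.sum_eq_zero
      intro k _
      rw [if_neg, zero_mul]
      have := k.isLt
      simp only [Fin.val_last]
      omega
    rw [s1, s2, add_zero]
  have hdetLM : (L * M).det = M.det := by rw [Matrix.det_mul, hdetL, one_mul]
  have hzero : ∀ b ∈ (Finset.univ : Finset (Fin (n+1))), b ≠ Fin.last n →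
      (-1 : ℝ) ^ ((b : ℕ) + ((Fin.last n : Fin (n+1)) : ℕ)) * (L * M) b (Fin.last n) *
        ((L * M).submatrix b.succAbove (Fin.last n).succAbove).det = 0 := by
    intro b _ hne
    obtain ⟨j', rfl⟩ := Fin.exists_castSucc_eq.mpr hne
    rw [hmul, ← hydef, ← zpow_add₀ hy, sub_add_cancel, sub_self, mul_zero, zero_mul]
  have hexp2 : (L * M).det
      = (-1 : ℝ) ^ (((Fin.last n : Fin (n+1)) : ℕ) + ((Fin.last n : Fin (n+1)) : ℕ)) *
        (L * M) (Fin.last n) (Fin.last n) *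
        ((L * M).submatrix (Fin.last n).succAbove (Fin.last n).succAbove).det := by
    rw [Matrix.det_succ_column (L * M) (Fin.last n)]
    exact Finset.sum_eq_single _ hzero (fun h => absurd (Finset.mem_univ _) h)
  have hsub : (L * M).submatrix (Fin.last n).succAbove (Fin.last n).succAbove
      = Matrix.of fun j i : Fin n => ξ i.castSucc ^ e j.castSucc
        - y ^ (e j.castSucc - e j.succ) * ξ i.castSucc ^ e j.succ := by
    ext j i
    rw [Matrix.submatrix_apply, Fin.succAbove_last, hmul]
    rfl
  have hsign : ((-1 : ℝ)) ^ (((Fin.last n : Fin (n+1)) : ℕ) + ((Fin.last n : Fin (n+1)) : ℕ)) = 1 :=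
    Even.neg_one_pow ⟨((Fin.last n : Fin (n+1)) : ℕ), rfl⟩
  rw [← hdetLM, hexp2, hsign, one_mul, hlastrow, hsub, ← hydef]

lemma branching (n : ℕ) (ξ : Fin (n + 1) → ℝ) (hpos : ∀ i, 0 < ξ i)
    (hne : ∀ i : Fin n, ξ i.castSucc ≠ ξ (Fin.last n))
    (l : Fin (n + 1) → ℤ) (hl : Antitone l) :
    (Dm (n + 1) ξ l).det =
      (∏ i : Fin n, (ξ i.castSucc - ξ (Fin.last n))) *
        ∑ m ∈ Fintype.piFinset (fun j : Fin n => Finset.Icc (l j.succ) (l j.castSucc)),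
          ξ (Fin.last n) ^ ((∑ i, l i) - ∑ j, m j) * (Dm n (fun i => ξ i.castSucc) m).det := by
  classical
  set y := ξ (Fin.last n) with hydef
  have hy : y ≠ 0 := ne_of_gt (hpos _)
  have hx : ∀ i : Fin n, ξ i.castSucc ≠ 0 := fun i => ne_of_gt (hpos _)
  have hxy : ∀ i : Fin n, ξ i.castSucc - y ≠ 0 := fun i => sub_ne_zero_of_ne (hne i)
  set e : Fin (n + 1) → ℤ := fun j => l j + n - (j : ℕ) with hedef
  set A : Fin n → Finset ℤ := fun j => Finset.Icc (l j.succ) (l j.castSucc) with hAdef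
  have step1 : ∀ m : Fin n → ℤ,
      y ^ ((∑ i, l i) - ∑ j, m j) * (Dm n (fun i => ξ i.castSucc) m).det
        = y ^ (l (Fin.last n)) *
            (Matrix.of fun j i : Fin n =>
              y ^ (l j.castSucc - m j) * ξ i.castSucc ^ (m j + (n : ℤ) - 1 - (j : ℤ))).det := by
    intro m
    have hdt : (Dm n (fun i => ξ i.castSucc) m).det
        = (Matrix.of fun j i : Fin n => ξ i.castSucc ^ (m j + (n:ℤ) - 1 - (j:ℤ))).det := by
      rw [← Matrix.det_transpose]
      rfl
    have hsum : (∑ i, l i) - ∑ j, m j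
        = l (Fin.last n) + ∑ j : Fin n, (l j.castSucc - m j) := by
      rw [Fin.sum_univ_castSucc (f := l), Finset.sum_sub_distrib]
      ring
    rw [hdt, hsum, zpow_add₀ hy, zpow_fsum y hy]
    have hmc := Matrix.det_mul_column (fun j => y ^ (l j.castSucc - m j))
      (Matrix.of fun j i : Fin n => ξ i.castSucc ^ (m j + (n:ℤ) - 1 - (j:ℤ)))
    simp only [Matrix.of_apply] at hmc
    rw [hmc]
    rw [mul_assoc]
  rw [Finset.sum_congr rfl (fun m _ => step1 m), ← Finset.mul_sum]
  have step2 : ∑ m ∈ Fintype.piFinset A,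
      (Matrix.of fun j i : Fin n =>
        y ^ (l j.castSucc - m j) * ξ i.castSucc ^ (m j + (n : ℤ) - 1 - (j : ℤ))).det
      = (Matrix.of fun j i : Fin n =>
          ∑ v ∈ A j, y ^ (l j.castSucc - v) * ξ i.castSucc ^ (v + (n : ℤ) - 1 - (j : ℤ))).det := by
    have key := (Matrix.detRowAlternating (R := ℝ) (n := Fin n)).toMultilinearMap.map_sum_finset
      (fun j v => fun i => y ^ (l j.castSucc - v) * ξ i.castSucc ^ (v + (n : ℤ) - 1 - (j : ℤ))) A
    have hfun : (fun (j : Fin n) => ∑ v ∈ A j,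
          (fun i => y ^ (l j.castSucc - v) * ξ i.castSucc ^ (v + (n : ℤ) - 1 - (j : ℤ))))
        = (fun (j : Fin n) (i : Fin n) =>
            ∑ v ∈ A j, y ^ (l j.castSucc - v) * ξ i.castSucc ^ (v + (n : ℤ) - 1 - (j : ℤ))) := by
      funext j i
      simp [Finset.sum_apply]
    have t1 : Matrix.detRowAlternating (R := ℝ) (n := Fin n)
          (fun (j : Fin n) (i : Fin n) =>
            ∑ v ∈ A j, y ^ (l j.castSucc - v) * ξ i.castSucc ^ (v + (n : ℤ) - 1 - (j : ℤ)))
        = Matrix.detRowAlternating (fun (j : Fin n) => ∑ v ∈ A j,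
            (fun i => y ^ (l j.castSucc - v) * ξ i.castSucc ^ (v + (n : ℤ) - 1 - (j : ℤ)))) :=
      (congrArg _ hfun).symm
    exact (t1.trans key).symm
  rw [step2]
  have step3 : (Matrix.of fun j i : Fin n =>
      ∑ v ∈ A j, y ^ (l j.castSucc - v) * ξ i.castSucc ^ (v + (n : ℤ) - 1 - (j : ℤ)))
      = Matrix.of fun j i : Fin n =>
          (ξ i.castSucc - y)⁻¹ *
            (ξ i.castSucc ^ e j.castSucc - y ^ (e j.castSucc - e j.succ) * ξ i.castSucc ^ e j.succ) := by
    ext j i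
    have hab : l j.succ ≤ l j.castSucc := hl (le_of_lt (Fin.castSucc_lt_succ (i := j)))
    have hgeo := geom_sum (ξ i.castSucc) y (hx i) hy (hxy i) (l j.succ) (l j.castSucc)
      ((n : ℤ) - 1 - (j : ℤ)) hab
    simp only [Matrix.of_apply]
    have hrw : ∀ v : ℤ, y ^ (l j.castSucc - v) * ξ i.castSucc ^ (v + (n : ℤ) - 1 - (j : ℤ))
        = y ^ (l j.castSucc - v) * ξ i.castSucc ^ (v + ((n : ℤ) - 1 - (j : ℤ))) := by
      intro v
      congr 1
      ring_nf
    rw [Finset.sum_congr rfl (fun v _ => hrw v), hAdef]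
    rw [hgeo]
    have e1 : l j.castSucc + 1 + ((n : ℤ) - 1 - (j : ℤ)) = e j.castSucc := by
      simp only [hedef, Fin.coe_castSucc]
      ring
    have e2 : l j.succ + ((n : ℤ) - 1 - (j : ℤ)) = e j.succ := by
      simp only [hedef, Fin.val_succ]
      push_cast
      ring
    have e3 : l j.castSucc - l j.succ + 1 = e j.castSucc - e j.succ := by
      simp only [hedef, Fin.coe_castSucc, Fin.val_succ]
      push_cast
      ring
    rw [e1, e2, e3]
    ring
  rw [step3]
  have step4 : (Matrix.of fun j i : Fin n =>
      (ξ i.castSucc - y)⁻¹ *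
        (ξ i.castSucc ^ e j.castSucc - y ^ (e j.castSucc - e j.succ) * ξ i.castSucc ^ e j.succ)).det
      = (∏ i : Fin n, (ξ i.castSucc - y)⁻¹) *
        (Matrix.of fun j i : Fin n =>
          ξ i.castSucc ^ e j.castSucc - y ^ (e j.castSucc - e j.succ) * ξ i.castSucc ^ e j.succ).det :=
    Matrix.det_mul_row (fun i => (ξ i.castSucc - y)⁻¹)
      (Matrix.of fun j i : Fin n =>
        ξ i.castSucc ^ e j.castSucc - y ^ (e j.castSucc - e j.succ) * ξ i.castSucc ^ e j.succ)
  rw [step4]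
  have step5 := detM_eq n ξ hpos e
  have hDm : (Dm (n + 1) ξ l).det = (Matrix.of fun j i : Fin (n + 1) => ξ i ^ e j).det := by
    rw [← Matrix.det_transpose]
    congr 1
    ext j i
    simp only [Matrix.transpose_apply, Dm, Matrix.of_apply, hedef]
    congr 1
    push_cast
    ring
  have helast : e (Fin.last n) = l (Fin.last n) := by
    simp only [hedef, Fin.val_last]
    ring
  rw [hDm, step5, helast]
  have hprod : (∏ i : Fin n, (ξ i.castSucc - y)) * ∏ i : Fin n, (ξ i.castSucc - y)⁻¹ = 1 := by
    rw [← Finset.prod_mul_distrib]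
    exact Finset.prod_eq_one fun i _ => mul_inv_cancel₀ (hxy i)
  set D := (Matrix.of fun j i : Fin n =>
    ξ i.castSucc ^ e j.castSucc - y ^ (e j.castSucc - e j.succ) * ξ i.castSucc ^ e j.succ).det with hD
  calc y ^ l (Fin.last n) * D
      = ((∏ i : Fin n, (ξ i.castSucc - y)) * ∏ i : Fin n, (ξ i.castSucc - y)⁻¹) *
          (y ^ l (Fin.last n) * D) := by rw [hprod, one_mul]
    _ = (∏ i : Fin n, (ξ i.castSucc - y)) *
          (y ^ l (Fin.last n) * ((∏ i : Fin n, (ξ i.castSucc - y)⁻¹) * D)) := by ring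

lemma antitone_of_interlace (n : ℕ) (l : Fin (n + 1) → ℤ) (m : Fin n → ℤ)
    (h : ∀ j : Fin n, l j.succ ≤ m j ∧ m j ≤ l j.castSucc) : Antitone m := by
  cases n with
  | zero => intro a; exact a.elim0
  | succ k =>
    rw [Fin.antitone_iff_succ_le]
    intro i
    calc m i.succ ≤ l (i.succ).castSucc := (h i.succ).2
      _ = l (i.castSucc).succ := by rw [Fin.succ_castSucc]
      _ ≤ m i.castSucc := (h i.castSucc).1

lemma castSucc_ne_last' (n : ℕ) (ξ : Fin (n + 1) → ℝ) (hinj : Function.Injective ξ) :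
    ∀ i : Fin n, ξ i.castSucc ≠ ξ (Fin.last n) := by
  intro i h
  have h2 := congrArg Fin.val (hinj h)
  simp only [Fin.coe_castSucc, Fin.val_last] at h2
  exact absurd h2 (by have := i.isLt; omega)

lemma mem_interlace_iff (n : ℕ) (l : Fin (n + 1) → ℤ) (m : Fin n → ℤ) :
    m ∈ Fintype.piFinset (fun j : Fin n => Finset.Icc (l j.succ) (l j.castSucc))
      ↔ ∀ i : Fin n, l i.succ ≤ m i ∧ m i ≤ l i.castSucc := by
  rw [Fintype.mem_piFinset]
  constructor <;> intro h i <;> have hh := h i <;> rw [Finset.mem_Icc] at * <;> exact hh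

lemma interlace_nonempty (n : ℕ) (l : Fin (n + 1) → ℤ) (hl : Antitone l) :
    (fun j : Fin n => l j.castSucc)
      ∈ Fintype.piFinset (fun j : Fin n => Finset.Icc (l j.succ) (l j.castSucc)) := by
  rw [Fintype.mem_piFinset]
  intro j
  rw [Finset.mem_Icc]
  exact ⟨hl (le_of_lt (Fin.castSucc_lt_succ (i := j))), le_refl _⟩

lemma schur_pos : ∀ (n : ℕ) (ξ : Fin n → ℝ), (∀ i, 0 < ξ i) → Function.Injective ξ →
    ∀ l : Fin n → ℤ, Antitone l → 0 < (Dm n ξ l).det / Vd n ξ := by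
  intro n
  induction n with
  | zero =>
    intro ξ _ _ l _
    have h1 : (Dm 0 ξ l).det = 1 := Matrix.det_fin_zero
    have h2 : Vd 0 ξ = 1 := by simp [Vd]
    rw [h1, h2]
    norm_num
  | succ n ih =>
    intro ξ hpos hinj l hl
    have hne := castSucc_ne_last' n ξ hinj
    have hxinj : Function.Injective (fun i : Fin n => ξ i.castSucc) :=
      fun a b hab => Fin.castSucc_injective n (hinj hab)
    have hP : (∏ i : Fin n, (ξ i.castSucc - ξ (Fin.last n))) ≠ 0 :=
      Finset.prod_ne_zero_iff.mpr fun i _ => sub_ne_zero_of_ne (hne i)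
    have hVd' : Vd n (fun i => ξ i.castSucc) ≠ 0 := Vd_ne_zero n _ hxinj
    rw [branching n ξ hpos hne l hl, Vd_split n ξ]
    rw [mul_comm (Vd n fun i => ξ i.castSucc) (∏ i : Fin n, (ξ i.castSucc - ξ (Fin.last n))),
      mul_div_mul_left _ _ hP, Finset.sum_div]
    apply Finset.sum_pos
    · intro m hm
      rw [mul_div_assoc]
      refine mul_pos (zpow_pos (hpos _) _) (ih (fun i => ξ i.castSucc) (fun i => hpos _) hxinj m
        (antitone_of_interlace n l m ((mem_interlace_iff n l m).mp hm)))
    · exact ⟨fun j : Fin n => l j.castSucc, interlace_nonempty n l hl⟩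

/-- The stochastic link `P_N^↓(λ→μ)` of the paper (sizes `N+1 → N`, 0-based):
`ξ_N^{|λ|-|μ|} · det[ξ_i^{μ_j+N-1-j}] / det[ξ_i^{λ_j+N-j}] · ∏_{i=1}^{N-1}(ξ_i-ξ_N)`
when `μ ≺ λ`, and `0` otherwise. -/
noncomputable def linkP (N : ℕ) (ξ : Fin (N + 1) → ℝ) (l : Fin (N + 1) → ℤ)
    (m : Fin N → ℤ) : ℝ :=
  if ∀ i : Fin N, l i.succ ≤ m i ∧ m i ≤ l i.castSucc then
    ξ (Fin.last N) ^ ((∑ i, l i) - ∑ i, m i) *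
      (Matrix.det (Matrix.of fun i j : Fin N =>
          ξ i.castSucc ^ (m j + (N : ℤ) - 1 - (j : ℤ))) /
        Matrix.det (Matrix.of fun i j : Fin (N + 1) =>
          ξ i ^ (l j + (N : ℤ) - (j : ℤ)))) *
      ∏ i : Fin N, (ξ i.castSucc - ξ (Fin.last N))
  else 0

/-- The link quantities are nonnegative and sum to `1` over all `μ` of length
`N` interlacing with `λ`. -/
theorem stmt10 (N : ℕ) (ξ : Fin (N + 1) → ℝ) (hpos : ∀ i, 0 < ξ i)
    (hinj : Function.Injective ξ) (l : Fin (N + 1) → ℤ) (hl : Antitone l) :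
    (∀ m : Fin N → ℤ, 0 ≤ linkP N ξ l m) ∧
      HasSum (fun m : Fin N → ℤ => linkP N ξ l m) 1 := by
  classical
  have hne := castSucc_ne_last' N ξ hinj
  have hxinj : Function.Injective (fun i : Fin N => ξ i.castSucc) :=
    fun a b hab => Fin.castSucc_injective N (hinj hab)
  have hP : (∏ i : Fin N, (ξ i.castSucc - ξ (Fin.last N))) ≠ 0 :=
    Finset.prod_ne_zero_iff.mpr fun i _ => sub_ne_zero_of_ne (hne i)
  have hVd' : Vd N (fun i => ξ i.castSucc) ≠ 0 := Vd_ne_zero N _ hxinj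
  have hVd : Vd (N + 1) ξ ≠ 0 := Vd_ne_zero (N + 1) ξ hinj
  have hsl : 0 < (Dm (N + 1) ξ l).det / Vd (N + 1) ξ := schur_pos (N + 1) ξ hpos hinj l hl
  have hdetD : (Dm (N + 1) ξ l).det
      = ((Dm (N + 1) ξ l).det / Vd (N + 1) ξ) * Vd (N + 1) ξ :=
    (div_mul_cancel₀ _ hVd).symm
  have hdetD_ne : (Dm (N + 1) ξ l).det ≠ 0 := by
    intro h0
    rw [h0, zero_div] at hsl
    exact lt_irrefl 0 hsl
  -- identify the big matrix in `linkP` with `Dm`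
  have hDd : (Matrix.of fun i j : Fin (N + 1) => ξ i ^ (l j + (N : ℤ) - (j : ℤ)))
      = Dm (N + 1) ξ l := by
    ext i j
    simp only [Matrix.of_apply, Dm]
    congr 1
    push_cast
    ring
  -- each linkP value for interlacing m
  have hval : ∀ m : Fin N → ℤ, (∀ i : Fin N, l i.succ ≤ m i ∧ m i ≤ l i.castSucc) →
      linkP N ξ l m = ξ (Fin.last N) ^ ((∑ i, l i) - ∑ i, m i) *
        ((Dm N (fun i => ξ i.castSucc) m).det / (Dm (N + 1) ξ l).det) *
        ∏ i : Fin N, (ξ i.castSucc - ξ (Fin.last N)) := by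
    intro m hm
    rw [linkP, if_pos hm, hDd]
    rfl
  -- positivity of each value
  have hnonneg : ∀ m : Fin N → ℤ, 0 ≤ linkP N ξ l m := by
    intro m
    by_cases hm : ∀ i : Fin N, l i.succ ≤ m i ∧ m i ≤ l i.castSucc
    · rw [hval m hm]
      have hsm : 0 < (Dm N (fun i => ξ i.castSucc) m).det / Vd N (fun i => ξ i.castSucc) :=
        schur_pos N _ (fun i => hpos _) hxinj m (antitone_of_interlace N l m hm)
      have hdetN : (Dm N (fun i => ξ i.castSucc) m).det
          = ((Dm N (fun i => ξ i.castSucc) m).det / Vd N (fun i => ξ i.castSucc)) *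
            Vd N (fun i => ξ i.castSucc) := (div_mul_cancel₀ _ hVd').symm
      have hkey : (Dm N (fun i => ξ i.castSucc) m).det / (Dm (N + 1) ξ l).det *
          (∏ i : Fin N, (ξ i.castSucc - ξ (Fin.last N)))
          = ((Dm N (fun i => ξ i.castSucc) m).det / Vd N (fun i => ξ i.castSucc)) /
            ((Dm (N + 1) ξ l).det / Vd (N + 1) ξ) := by
        rw [eq_div_iff (ne_of_gt hsl)]
        rw [hdetD]
        rw [Vd_split N ξ]
        field_simp
      rw [mul_assoc, hkey]
      exact le_of_lt (mul_pos (zpow_pos (hpos _) _) (div_pos hsm hsl))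
    · rw [linkP, if_neg hm]
  refine ⟨hnonneg, ?_⟩
  set S := Fintype.piFinset (fun j : Fin N => Finset.Icc (l j.succ) (l j.castSucc)) with hS
  have hvanish : ∀ m ∉ S, linkP N ξ l m = 0 := by
    intro m hm
    rw [linkP, if_neg]
    intro hc
    exact hm ((mem_interlace_iff N l m).mpr hc)
  have hsum := hasSum_sum_of_ne_finset_zero (L := SummationFilter.unconditional _) (s := S) hvanish
  have htot : ∑ m ∈ S, linkP N ξ l m = 1 := by
    have hbr := branching N ξ hpos hne l hl
    set Ssum := ∑ m ∈ S, ξ (Fin.last N) ^ ((∑ i, l i) - ∑ j, m j) *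
      (Dm N (fun i => ξ i.castSucc) m).det with hSsumdef
    have hSne : Ssum ≠ 0 := by
      intro h0
      rw [h0, mul_zero] at hbr
      exact hdetD_ne hbr
    calc ∑ m ∈ S, linkP N ξ l m
        = ∑ m ∈ S, (ξ (Fin.last N) ^ ((∑ i, l i) - ∑ i, m i) *
            (Dm N (fun i => ξ i.castSucc) m).det) *
            ((∏ i : Fin N, (ξ i.castSucc - ξ (Fin.last N))) / (Dm (N + 1) ξ l).det) := by
          refine Finset.sum_congr rfl fun m hm => ?_
          rw [hval m ((mem_interlace_iff N l m).mp hm)]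
          ring
      _ = Ssum * ((∏ i : Fin N, (ξ i.castSucc - ξ (Fin.last N))) / (Dm (N + 1) ξ l).det) := by
          rw [← Finset.sum_mul]
      _ = 1 := by
          rw [hbr]
          field_simp
  rw [← htot]
  exact hsum
end

section
/- For 0 < q < 1 and any sequence of integers a[k+1] < a[k+2] < ... and its modification b[1] < b[2] < ... differing from (a[k+1], a[k+2], ...) in at most k entries, the ratio ∏_{i<j}(1 - q^{b[j]-b[i]}) / ∏_{k+1 ≤ i < j}(1 - q^{a[j]-a[i]}) is bounded away from 0 and ∞ by constants depending only on k and q (not on the length of the sequences). -/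
open scoped BigOperators

open Finset


-- Weierstrass product inequality
lemma stmt17_weier {s : Finset ℕ} {f : ℕ → ℝ} (h0 : ∀ i ∈ s, 0 ≤ f i)
    (h1 : ∀ i ∈ s, f i ≤ 1) :
    1 - ∑ i ∈ s, f i ≤ ∏ i ∈ s, (1 - f i) := by
  classical
  induction s using Finset.induction_on with
  | empty => simp
  | @insert a s ha ih =>
    rw [Finset.prod_insert ha, Finset.sum_insert ha]
    have h0a : 0 ≤ f a := h0 a (mem_insert_self _ _)
    have h1a : f a ≤ 1 := h1 a (mem_insert_self _ _)
    have ih' := ih (fun i hi => h0 i (mem_insert_of_mem hi))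
      (fun i hi => h1 i (mem_insert_of_mem hi))
    have hsum : 0 ≤ ∑ i ∈ s, f i :=
      Finset.sum_nonneg fun i hi => h0 i (mem_insert_of_mem hi)
    nlinarith [Finset.prod_nonneg (fun i (hi : i ∈ s) =>
      sub_nonneg.mpr (h1 i (mem_insert_of_mem hi)))]

-- subset product monotonicity for factors in [0,1]
lemma stmt17_prod_subset {ι : Type*} [DecidableEq ι] {U V : Finset ι} {f : ι → ℝ}
    (h : U ⊆ V) (h0 : ∀ i ∈ V, 0 ≤ f i) (h1 : ∀ i ∈ V, f i ≤ 1) :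
    ∏ i ∈ V, f i ≤ ∏ i ∈ U, f i := by
  rw [← Finset.prod_sdiff h]
  have hU : 0 ≤ ∏ i ∈ U, f i := Finset.prod_nonneg fun i hi => h0 i (h hi)
  have hVU : ∏ i ∈ V \ U, f i ≤ 1 :=
    Finset.prod_le_one (fun i hi => h0 i (mem_sdiff.mp hi).1)
      (fun i hi => h1 i (mem_sdiff.mp hi).1)
  have hVU0 : 0 ≤ ∏ i ∈ V \ U, f i :=
    Finset.prod_nonneg fun i hi => h0 i (mem_sdiff.mp hi).1
  nlinarith

-- uniform lower bound for partial products
lemma stmt17_c (q : ℝ) (hq0 : 0 < q) (hq1 : q < 1) :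
    ∃ c : ℝ, 0 < c ∧ c ≤ 1 ∧ ∀ N, c ≤ ∏ n ∈ Finset.Icc 1 N, (1 - q ^ n) := by
  obtain ⟨n₀, hn₀⟩ := exists_pow_lt_of_lt_one (x := (1 - q) / 2) (by linarith) hq1
  have h1q : (0:ℝ) < 1 - q := by linarith
  refine ⟨(1 - q) ^ n₀ * (1 / 2), by positivity, ?_, ?_⟩
  · have : (1 - q) ^ n₀ ≤ 1 := pow_le_one₀ (by linarith) (by linarith)
    nlinarith [pow_nonneg (by linarith : (0:ℝ) ≤ 1 - q) n₀]
  intro N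
  have hfac : ∀ n, 1 ≤ n → 1 - q ≤ 1 - q ^ n := by
    intro n hn
    have h : q ^ n ≤ q ^ 1 := pow_le_pow_of_le_one hq0.le hq1.le hn
    rw [pow_one] at h; linarith
  have hbase : ∀ M, (1 - q) ^ M ≤ ∏ n ∈ Finset.Icc 1 M, (1 - q ^ n) := by
    intro M
    calc (1 - q) ^ M = ∏ n ∈ Finset.Icc 1 M, (1 - q) := by
          rw [Finset.prod_const, Nat.card_Icc]; norm_num
      _ ≤ _ := Finset.prod_le_prod (fun i _ => by linarith)
          (fun i hi => hfac i (Finset.mem_Icc.mp hi).1)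
  rcases le_or_gt N n₀ with hN | hN
  · have h1 : (1 - q) ^ n₀ ≤ (1 - q) ^ N :=
      pow_le_pow_of_le_one (by linarith) (by linarith) hN
    have h2 := hbase N
    nlinarith [pow_nonneg (by linarith : (0:ℝ) ≤ 1 - q) n₀]
  · -- split Icc 1 N = Icc 1 n₀ ∪ Icc (n₀+1) N
    have hsplit : Finset.Icc 1 N = Finset.Icc 1 n₀ ∪ Finset.Icc (n₀ + 1) N := by
      ext x; simp [Finset.mem_Icc]; omega
    have hdisj : Disjoint (Finset.Icc 1 n₀) (Finset.Icc (n₀ + 1) N) := by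
      simp [Finset.disjoint_left, Finset.mem_Icc]; omega
    rw [hsplit, Finset.prod_union hdisj]
    have h1p : (1 - q) ^ n₀ ≤ ∏ n ∈ Finset.Icc 1 n₀, (1 - q ^ n) := hbase n₀
    have htail : (1 / 2 : ℝ) ≤ ∏ n ∈ Finset.Icc (n₀ + 1) N, (1 - q ^ n) := by
      have hsum : ∑ n ∈ Finset.Icc (n₀ + 1) N, q ^ n ≤ 1 / 2 := by
        have hIco : Finset.Icc (n₀ + 1) N = Finset.Ico (n₀ + 1) (N + 1) := by
          rw [Finset.Ico_add_one_right_eq_Icc]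
        rw [hIco, Finset.sum_Ico_eq_sum_range]
        have : ∑ i ∈ Finset.range (N + 1 - (n₀ + 1)), q ^ (n₀ + 1 + i)
            = q ^ (n₀ + 1) * ∑ i ∈ Finset.range (N + 1 - (n₀ + 1)), q ^ i := by
          rw [Finset.mul_sum]; exact Finset.sum_congr rfl fun i _ => by rw [pow_add]
        rw [this]
        have hgeo : ∑ i ∈ Finset.range (N + 1 - (n₀ + 1)), q ^ i ≤ 1 / (1 - q) := by
          have := geom_sum_mul q (N + 1 - (n₀ + 1))
          have hpos : (0:ℝ) < 1 - q := by linarith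
          rw [le_div_iff₀ hpos]
          nlinarith [pow_nonneg hq0.le (N + 1 - (n₀ + 1))]
        have hq' : q ^ (n₀ + 1) ≤ (1 - q) / 2 := by
          calc q ^ (n₀ + 1) ≤ q ^ n₀ := by
                have := pow_le_pow_of_le_one hq0.le hq1.le (Nat.le_succ n₀)
                simpa using this
            _ ≤ (1 - q) / 2 := hn₀.le
        calc q ^ (n₀ + 1) * ∑ i ∈ Finset.range (N + 1 - (n₀ + 1)), q ^ i
            ≤ ((1 - q) / 2) * (1 / (1 - q)) := by
              apply mul_le_mul hq' hgeo (Finset.sum_nonneg fun i _ => pow_nonneg hq0.le i)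
                (by linarith)
          _ = 1 / 2 := by
              have h1q : (1:ℝ) - q ≠ 0 := by linarith
              field_simp
      calc (1/2 : ℝ) ≤ 1 - ∑ n ∈ Finset.Icc (n₀ + 1) N, q ^ n := by linarith
        _ ≤ _ := stmt17_weier (fun i _ => pow_nonneg hq0.le i)
            (fun i _ => pow_le_one₀ hq0.le hq1.le)
    have hp1 : (0:ℝ) ≤ ∏ n ∈ Finset.Icc 1 n₀, (1 - q ^ n) :=
      Finset.prod_nonneg fun i hi => by
        have := hfac i (Finset.mem_Icc.mp hi).1; linarith
    have hp2 : (0:ℝ) ≤ ∏ n ∈ Finset.Icc (n₀+1) N, (1 - q ^ n) :=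
      Finset.prod_nonneg fun i hi => by
        have := hfac i (by exact le_trans (by omega) (Finset.mem_Icc.mp hi).1); linarith
    have h10 : (0:ℝ) ≤ (1-q)^n₀ := pow_nonneg (by linarith) _
    nlinarith

lemma stmt17_bad {ι τ : Type*} [DecidableEq ι] [DecidableEq τ] (S : Finset ι) (F : ι → ℝ)
    (hF0 : ∀ p ∈ S, 0 ≤ F p) (hF1 : ∀ p ∈ S, F p ≤ 1) (c : ℝ) (hc0 : 0 < c)
    (R : τ → Finset ι) (hR : ∀ t, R t ⊆ S) :
    ∀ (T : Finset τ), (∀ t ∈ T, c ≤ ∏ p ∈ R t, F p) →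
      c ^ T.card ≤ ∏ p ∈ S.filter (fun p => ∃ t ∈ T, p ∈ R t), F p := by
  intro T
  induction T using Finset.induction_on with
  | empty => intro _; simp
  | @insert a T ha ih =>
    intro hrow
    have ih' := ih (fun t ht => hrow t (mem_insert_of_mem ht))
    set B' := S.filter (fun p => ∃ t ∈ T, p ∈ R t) with hB'
    set B := S.filter (fun p => ∃ t ∈ insert a T, p ∈ R t) with hB
    have hsub : B' ⊆ B := by
      rw [hB', hB]
      apply Finset.monotone_filter_right
      rintro p _ ⟨t, ht, hp⟩
      exact ⟨t, mem_insert_of_mem ht, hp⟩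
    have hdiff : B \ B' ⊆ R a := by
      intro p hp
      rw [mem_sdiff] at hp
      obtain ⟨hpB, hpB'⟩ := hp
      rw [hB, mem_filter] at hpB
      obtain ⟨hpS, t, ht, hpt⟩ := hpB
      rcases mem_insert.mp ht with rfl | htT
      · exact hpt
      · exact absurd (mem_filter.mpr ⟨hpS, t, htT, hpt⟩) hpB'
    have hdiffS : B \ B' ⊆ S := fun p hp => (hR a) (hdiff hp)
    have hda : c ≤ ∏ p ∈ B \ B', F p := by
      refine le_trans (hrow a (mem_insert_self _ _)) ?_
      exact stmt17_prod_subset hdiff (fun p hp => hF0 p (hR a hp))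
        (fun p hp => hF1 p (hR a hp))
    rw [← Finset.prod_sdiff hsub, Finset.card_insert_of_notMem ha, pow_succ,
      mul_comm (c ^ T.card) c]
    refine mul_le_mul hda ih' (pow_nonneg hc0.le _)
      (Finset.prod_nonneg fun p hp => hF0 p (hdiffS hp))

lemma stmt17_key {ι τ : Type*} [DecidableEq ι] [DecidableEq τ] (S : Finset ι) (F G : ι → ℝ)
    (hF0 : ∀ p ∈ S, 0 ≤ F p) (hF1 : ∀ p ∈ S, F p ≤ 1)
    (hG0 : ∀ p ∈ S, 0 ≤ G p) (hG1 : ∀ p ∈ S, G p ≤ 1)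
    (c : ℝ) (hc0 : 0 < c) (hc1 : c ≤ 1) (k : ℕ)
    (R : τ → Finset ι) (hR : ∀ t, R t ⊆ S)
    (T : Finset τ) (hTk : T.card ≤ k)
    (hrow : ∀ t ∈ T, c ≤ ∏ p ∈ R t, F p)
    (heq : ∀ p ∈ S, (¬ ∃ t ∈ T, p ∈ R t) → F p = G p) :
    c ^ k * ∏ p ∈ S, G p ≤ ∏ p ∈ S, F p := by
  classical
  have hsplitF := Finset.prod_filter_mul_prod_filter_not S (fun p => ∃ t ∈ T, p ∈ R t) F
  have hsplitG := Finset.prod_filter_mul_prod_filter_not S (fun p => ∃ t ∈ T, p ∈ R t) G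
  rw [← hsplitF, ← hsplitG]
  set bF := ∏ p ∈ S.filter (fun p => ∃ t ∈ T, p ∈ R t), F p with hbF
  set gF := ∏ p ∈ S.filter (fun p => ¬ ∃ t ∈ T, p ∈ R t), F p with hgF
  set bG := ∏ p ∈ S.filter (fun p => ∃ t ∈ T, p ∈ R t), G p with hbG
  set gG := ∏ p ∈ S.filter (fun p => ¬ ∃ t ∈ T, p ∈ R t), G p with hgG
  have hgood : gF = gG := Finset.prod_congr rfl fun p hp => by
    rw [mem_filter] at hp; exact heq p hp.1 hp.2
  have hbad : c ^ T.card ≤ bF := stmt17_bad S F hF0 hF1 c hc0 R hR T hrow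
  have hk : c ^ k ≤ c ^ T.card := pow_le_pow_of_le_one hc0.le hc1 hTk
  have hbG1 : bG ≤ 1 := Finset.prod_le_one
    (fun p hp => hG0 p ((filter_subset _ _) hp)) (fun p hp => hG1 p ((filter_subset _ _) hp))
  have hbG0 : 0 ≤ bG := Finset.prod_nonneg fun p hp => hG0 p ((filter_subset _ _) hp)
  have hgG0 : 0 ≤ gG := Finset.prod_nonneg fun p hp => hG0 p ((filter_subset _ _) hp)
  have hck : (0:ℝ) ≤ c ^ k := pow_nonneg hc0.le k
  rw [hgood]
  have h1 : c ^ k * (bG * gG) ≤ c ^ k * gG := by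
    nlinarith [mul_nonneg (mul_nonneg hck hgG0) (sub_nonneg.2 hbG1)]
  have h2 : c ^ k * gG ≤ bF * gG :=
    mul_le_mul_of_nonneg_right (le_trans hk hbad) hgG0
  linarith

lemma stmt17_gap {m : ℕ} {b : Fin m → ℤ} (hb : StrictMono b) :
    ∀ (d : ℕ) (i j : Fin m), j.val = i.val + d → (d : ℤ) ≤ b j - b i := by
  intro d
  induction d with
  | zero =>
    intro i j h
    have : i = j := Fin.ext (by omega)
    simp [this]
  | succ d ih =>
    intro i j h
    have hj' : i.val + d < m := by have := j.isLt; omega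
    have h1 := ih i ⟨i.val + d, hj'⟩ rfl
    have h2 : b ⟨i.val + d, hj'⟩ < b j := hb (by rw [Fin.lt_def]; simp; omega)
    have h3 : b ⟨i.val + d, hj'⟩ + 1 ≤ b j := h2
    push_cast
    linarith

lemma stmt17_row {q : ℝ} (hq0 : 0 < q) (hq1 : q < 1) {c : ℝ}
    (hc : ∀ N, c ≤ ∏ n ∈ Finset.Icc 1 N, (1 - q ^ n))
    {m : ℕ} {b : Fin m → ℤ} (hb : StrictMono b) (t : Fin m) :
    c ≤ ∏ j ∈ Finset.univ.filter (fun j => t < j), (1 - q ^ (b j - b t)) := by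
  have hIcc0 : ∀ n ∈ Finset.Icc 1 m, (0:ℝ) ≤ 1 - q ^ n := fun n _ => by
    have := pow_le_one₀ hq0.le hq1.le (n := n); linarith
  have hIcc1 : ∀ n ∈ Finset.Icc 1 m, (1 - q ^ n : ℝ) ≤ 1 := fun n _ => by
    have := pow_nonneg hq0.le n; linarith
  have hsubset : (Finset.univ.filter (fun j => t < j)).image (fun j : Fin m => j.val - t.val)
      ⊆ Finset.Icc 1 m := by
    intro n hn
    simp only [Finset.mem_image, Finset.mem_filter, Finset.mem_univ, true_and] at hn
    obtain ⟨j, hj, rfl⟩ := hn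
    rw [Fin.lt_def] at hj
    have := j.isLt
    simp only [Finset.mem_Icc]; omega
  have step1 : c ≤ ∏ n ∈ (Finset.univ.filter (fun j => t < j)).image
      (fun j : Fin m => j.val - t.val), (1 - q ^ n) :=
    le_trans (hc m) (stmt17_prod_subset hsubset hIcc0 hIcc1)
  have hinj : Set.InjOn (fun j : Fin m => j.val - t.val)
      (Finset.univ.filter (fun j => t < j)) := by
    intro x hx y hy hxy
    simp only [Finset.coe_filter, Set.mem_setOf_eq, Fin.lt_def] at hx hy
    simp only at hxy
    exact Fin.ext (by omega)
  rw [Finset.prod_image (fun x hx y hy h => hinj hx hy h)] at step1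
  refine le_trans step1 (Finset.prod_le_prod (fun j hj => ?_) (fun j hj => ?_))
  · rw [Finset.mem_filter, Fin.lt_def] at hj
    have := pow_le_one₀ hq0.le hq1.le (n := j.val - t.val); linarith
  · rw [Finset.mem_filter, Fin.lt_def] at hj
    have hgap := stmt17_gap hb (j.val - t.val) t j (by omega)
    have hle : q ^ (b j - b t) ≤ q ^ ((j.val - t.val : ℕ) : ℤ) :=
      zpow_le_zpow_right_of_le_one₀ hq0 hq1.le hgap
    rw [zpow_natCast] at hle
    linarith

lemma stmt17_col {q : ℝ} (hq0 : 0 < q) (hq1 : q < 1) {c : ℝ}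
    (hc : ∀ N, c ≤ ∏ n ∈ Finset.Icc 1 N, (1 - q ^ n))
    {m : ℕ} {b : Fin m → ℤ} (hb : StrictMono b) (t : Fin m) :
    c ≤ ∏ i ∈ Finset.univ.filter (fun i => i < t), (1 - q ^ (b t - b i)) := by
  have hIcc0 : ∀ n ∈ Finset.Icc 1 m, (0:ℝ) ≤ 1 - q ^ n := fun n _ => by
    have := pow_le_one₀ hq0.le hq1.le (n := n); linarith
  have hIcc1 : ∀ n ∈ Finset.Icc 1 m, (1 - q ^ n : ℝ) ≤ 1 := fun n _ => by
    have := pow_nonneg hq0.le n; linarith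
  have hsubset : (Finset.univ.filter (fun i => i < t)).image (fun i : Fin m => t.val - i.val)
      ⊆ Finset.Icc 1 m := by
    intro n hn
    simp only [Finset.mem_image, Finset.mem_filter, Finset.mem_univ, true_and] at hn
    obtain ⟨i, hi, rfl⟩ := hn
    rw [Fin.lt_def] at hi
    have := t.isLt
    simp only [Finset.mem_Icc]; omega
  have step1 : c ≤ ∏ n ∈ (Finset.univ.filter (fun i => i < t)).image
      (fun i : Fin m => t.val - i.val), (1 - q ^ n) :=
    le_trans (hc m) (stmt17_prod_subset hsubset hIcc0 hIcc1)
  have hinj : Set.InjOn (fun i : Fin m => t.val - i.val)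
      (Finset.univ.filter (fun i => i < t)) := by
    intro x hx y hy hxy
    simp only [Finset.coe_filter, Set.mem_setOf_eq, Fin.lt_def] at hx hy
    simp only at hxy
    exact Fin.ext (by omega)
  rw [Finset.prod_image (fun x hx y hy h => hinj hx hy h)] at step1
  refine le_trans step1 (Finset.prod_le_prod (fun i hi => ?_) (fun i hi => ?_))
  · rw [Finset.mem_filter, Fin.lt_def] at hi
    have := pow_le_one₀ hq0.le hq1.le (n := t.val - i.val); linarith
  · rw [Finset.mem_filter, Fin.lt_def] at hi
    have hgap := stmt17_gap hb (t.val - i.val) i t (by omega)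
    have hle : q ^ (b t - b i) ≤ q ^ ((t.val - i.val : ℕ) : ℤ) :=
      zpow_le_zpow_right_of_le_one₀ hq0 hq1.le hgap
    rw [zpow_natCast] at hle
    linarith

section Main

variable {q : ℝ}

-- bounds on single factors
lemma stmt17_fac_pos (hq0 : 0 < q) (hq1 : q < 1) {m : ℕ} {b : Fin m → ℤ}
    (hb : StrictMono b) {i j : Fin m} (hij : i < j) :
    0 < 1 - q ^ (b j - b i) ∧ 1 - q ^ (b j - b i) ≤ 1 := by
  rw [Fin.lt_def] at hij
  have hgap := stmt17_gap hb (j.val - i.val) i j (by omega)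
  have h1 : (1:ℤ) ≤ b j - b i := by
    have hd : (1:ℤ) ≤ ((j.val - i.val : ℕ) : ℤ) := by exact_mod_cast (by omega : 1 ≤ j.val - i.val)
    linarith
  have hle : q ^ (b j - b i) ≤ q ^ (1:ℤ) :=
    zpow_le_zpow_right_of_le_one₀ hq0 hq1.le h1
  rw [zpow_one] at hle
  have hpos : (0:ℝ) < q ^ (b j - b i) := zpow_pos hq0 _
  constructor <;> linarith

lemma stmt17_main (hq0 : 0 < q) (hq1 : q < 1) {c : ℝ} (hc0 : 0 < c) (hc1 : c ≤ 1)
    (hc : ∀ N, c ≤ ∏ n ∈ Finset.Icc 1 N, (1 - q ^ n))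
    (k m : ℕ) (a b : Fin m → ℤ) (hma : StrictMono a) (hmb : StrictMono b)
    (hcard : (Finset.univ.filter (fun i => a i ≠ b i)).card ≤ k) :
    (c ^ 2) ^ k * (∏ i : Fin m, ∏ j ∈ Finset.univ.filter (fun j => i < j),
        (1 - q ^ (a j - a i))) ≤
      ∏ i : Fin m, ∏ j ∈ Finset.univ.filter (fun j => i < j), (1 - q ^ (b j - b i)) := by
  classical
  set S : Finset ((_ : Fin m) × Fin m) :=
    Finset.univ.sigma (fun i => Finset.univ.filter (fun j => i < j)) with hS
  have hmem : ∀ p : (_ : Fin m) × Fin m, p ∈ S ↔ p.1 < p.2 := by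
    intro p; simp [hS, Finset.mem_sigma]
  have hrwb : (∏ i : Fin m, ∏ j ∈ Finset.univ.filter (fun j => i < j),
      (1 - q ^ (b j - b i))) = ∏ p ∈ S, (1 - q ^ (b p.2 - b p.1)) :=
    Finset.prod_sigma' _ _ _
  have hrwa : (∏ i : Fin m, ∏ j ∈ Finset.univ.filter (fun j => i < j),
      (1 - q ^ (a j - a i))) = ∏ p ∈ S, (1 - q ^ (a p.2 - a p.1)) :=
    Finset.prod_sigma' _ _ _
  rw [hrwa, hrwb]
  set T : Finset (Fin m) := Finset.univ.filter (fun i => a i ≠ b i) with hT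
  set R : Fin m → Finset ((_ : Fin m) × Fin m) :=
    fun t => S.filter (fun p => p.1 = t ∨ p.2 = t) with hR
  have hRsub : ∀ t, R t ⊆ S := fun t => Finset.filter_subset _ _
  -- row product identity
  have hrowprod : ∀ (f : Fin m → ℤ), StrictMono f → ∀ t : Fin m,
      c ^ 2 ≤ ∏ p ∈ R t, (1 - q ^ (f p.2 - f p.1)) := by
    intro f hf t
    have hsplit : R t = S.filter (fun p => p.1 = t) ∪ S.filter (fun p => p.2 = t) := by
      simp only [hR]; exact Finset.filter_or _ _ _
    have hdisj : Disjoint (S.filter (fun p => p.1 = t)) (S.filter (fun p => p.2 = t)) := by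
      rw [Finset.disjoint_left]
      intro p h1 h2
      rw [Finset.mem_filter] at h1 h2
      have := (hmem p).mp h1.1
      rw [h1.2, h2.2] at this
      exact lt_irrefl _ this
    have himg1 : S.filter (fun p => p.1 = t)
        = (Finset.univ.filter (fun j => t < j)).image (fun j => (⟨t, j⟩ : (_ : Fin m) × Fin m)) := by
      ext p
      obtain ⟨p1, p2⟩ := p
      simp only [Finset.mem_filter, Finset.mem_image, Finset.mem_univ, true_and]
      constructor
      · rintro ⟨hpS, rfl⟩
        exact ⟨p2, (hmem ⟨p1, p2⟩).mp hpS, rfl⟩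
      · rintro ⟨j, hj, h⟩
        obtain ⟨h1, h2⟩ := Sigma.mk.inj_iff.mp h
        cases h1
        cases eq_of_heq h2
        exact ⟨(hmem _).mpr hj, rfl⟩
    have himg2 : S.filter (fun p => p.2 = t)
        = (Finset.univ.filter (fun i => i < t)).image (fun i => (⟨i, t⟩ : (_ : Fin m) × Fin m)) := by
      ext p
      obtain ⟨p1, p2⟩ := p
      simp only [Finset.mem_filter, Finset.mem_image, Finset.mem_univ, true_and]
      constructor
      · rintro ⟨hpS, rfl⟩
        exact ⟨p1, (hmem ⟨p1, p2⟩).mp hpS, rfl⟩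
      · rintro ⟨i, hi, h⟩
        obtain ⟨h1, h2⟩ := Sigma.mk.inj_iff.mp h
        cases h1
        cases eq_of_heq h2
        exact ⟨(hmem _).mpr hi, rfl⟩
    have hinj1 : ∀ x ∈ Finset.univ.filter (fun j => t < j),
        ∀ y ∈ Finset.univ.filter (fun j => t < j),
        (⟨t, x⟩ : (_ : Fin m) × Fin m) = ⟨t, y⟩ → x = y := by
      intro x _ y _ h
      simpa using h
    have hinj2 : ∀ x ∈ Finset.univ.filter (fun i => i < t),
        ∀ y ∈ Finset.univ.filter (fun i => i < t),
        (⟨x, t⟩ : (_ : Fin m) × Fin m) = ⟨y, t⟩ → x = y := by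
      intro x _ y _ h
      simpa using h
    rw [hsplit, Finset.prod_union hdisj, himg1, himg2,
      Finset.prod_image hinj1, Finset.prod_image hinj2]
    have hb1 : c ≤ ∏ j ∈ Finset.univ.filter (fun j => t < j), (1 - q ^ (f j - f t)) :=
      stmt17_row hq0 hq1 hc hf t
    have hb2 : c ≤ ∏ i ∈ Finset.univ.filter (fun i => i < t), (1 - q ^ (f t - f i)) :=
      stmt17_col hq0 hq1 hc hf t
    calc c ^ 2 = c * c := sq c
      _ ≤ _ := mul_le_mul hb1 hb2 hc0.le
          (Finset.prod_nonneg fun j hj => by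
            have := stmt17_fac_pos hq0 hq1 hf ((Finset.mem_filter.mp hj).2); linarith [this.1])
  -- factor bounds
  have hF0 : ∀ p ∈ S, (0:ℝ) ≤ 1 - q ^ (b p.2 - b p.1) := fun p hp =>
    (stmt17_fac_pos hq0 hq1 hmb ((hmem p).mp hp)).1.le
  have hF1 : ∀ p ∈ S, (1 - q ^ (b p.2 - b p.1) : ℝ) ≤ 1 := fun p hp =>
    (stmt17_fac_pos hq0 hq1 hmb ((hmem p).mp hp)).2
  have hG0 : ∀ p ∈ S, (0:ℝ) ≤ 1 - q ^ (a p.2 - a p.1) := fun p hp =>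
    (stmt17_fac_pos hq0 hq1 hma ((hmem p).mp hp)).1.le
  have hG1 : ∀ p ∈ S, (1 - q ^ (a p.2 - a p.1) : ℝ) ≤ 1 := fun p hp =>
    (stmt17_fac_pos hq0 hq1 hma ((hmem p).mp hp)).2
  have heq : ∀ p ∈ S, (¬ ∃ t ∈ T, p ∈ R t) →
      (1 - q ^ (b p.2 - b p.1) : ℝ) = 1 - q ^ (a p.2 - a p.1) := by
    intro p hp hne
    push_neg at hne
    have h1 : a p.1 = b p.1 := by
      by_contra hab
      exact hne p.1 (by rw [hT]; simp [hab])
        (by rw [hR, Finset.mem_filter]; exact ⟨hp, Or.inl rfl⟩)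
    have h2 : a p.2 = b p.2 := by
      by_contra hab
      exact hne p.2 (by rw [hT]; simp [hab])
        (by rw [hR, Finset.mem_filter]; exact ⟨hp, Or.inr rfl⟩)
    rw [h1, h2]
  exact stmt17_key S _ _ hF0 hF1 hG0 hG1 (c ^ 2) (by positivity)
    (by nlinarith) k R hRsub T hcard (fun t _ => hrowprod b hmb t) heq

end Main

/-- If `a` and `b` are strictly increasing integer sequences of the same length
agreeing in all but at most `k` positions, then the ratio
`∏_{i<j}(1-q^{b_j-b_i}) / ∏_{i<j}(1-q^{a_j-a_i})` is bounded away from `0` and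
`∞` by constants depending only on `q` and `k` (not on the length). -/
theorem stmt17 (q : ℝ) (hq0 : 0 < q) (hq1 : q < 1) (k : ℕ) :
    ∃ C₁ C₂ : ℝ, 0 < C₁ ∧ 0 < C₂ ∧
      ∀ (m : ℕ) (a b : Fin m → ℤ), StrictMono a → StrictMono b →
        (Finset.univ.filter (fun i => a i ≠ b i)).card ≤ k →
        C₁ * (∏ i : Fin m, ∏ j ∈ Finset.univ.filter (fun j => i < j),
            (1 - q ^ (a j - a i))) ≤
          (∏ i : Fin m, ∏ j ∈ Finset.univ.filter (fun j => i < j),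
            (1 - q ^ (b j - b i))) ∧
        (∏ i : Fin m, ∏ j ∈ Finset.univ.filter (fun j => i < j),
            (1 - q ^ (b j - b i))) ≤
          C₂ * (∏ i : Fin m, ∏ j ∈ Finset.univ.filter (fun j => i < j),
            (1 - q ^ (a j - a i))) := by
  obtain ⟨c, hc0, hc1, hc⟩ := stmt17_c q hq0 hq1
  refine ⟨(c ^ 2) ^ k, ((c ^ 2) ^ k)⁻¹, by positivity, by positivity, ?_⟩
  intro m a b hma hmb hcard
  refine ⟨stmt17_main hq0 hq1 hc0 hc1 hc k m a b hma hmb hcard, ?_⟩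
  have hswap : (Finset.univ.filter (fun i => b i ≠ a i)).card ≤ k := by
    have : (Finset.univ.filter (fun i => b i ≠ a i))
        = Finset.univ.filter (fun i => a i ≠ b i) := by
      apply Finset.filter_congr; intro i _; simp [ne_comm]
    rwa [this]
  have h2 := stmt17_main hq0 hq1 hc0 hc1 hc k m b a hmb hma hswap
  have hpk : (0:ℝ) < (c ^ 2) ^ k := by positivity
  calc (∏ i : Fin m, ∏ j ∈ Finset.univ.filter (fun j => i < j), (1 - q ^ (b j - b i)))
      = ((c ^ 2) ^ k)⁻¹ * ((c ^ 2) ^ k *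
        (∏ i : Fin m, ∏ j ∈ Finset.univ.filter (fun j => i < j), (1 - q ^ (b j - b i)))) := by
        rw [← mul_assoc, inv_mul_cancel₀ hpk.ne', one_mul]
    _ ≤ ((c ^ 2) ^ k)⁻¹ * (∏ i : Fin m, ∏ j ∈ Finset.univ.filter (fun j => i < j),
        (1 - q ^ (a j - a i))) := by
        apply mul_le_mul_of_nonneg_left h2 (by positivity)
end

section
/- Let P_t be a Markov semigroup of transition kernels on a locally compact metrizable space Q, and suppose there is a sequence of countable discrete spaces Γ_N with Markov links Λ_N^∞ : Q → M_p(Γ_N) that are Feller kernels, whose induced maps (Λ_N^∞)^* have union of ranges dense in C₀(Q), and Markov semigroups P_{t,N} on Γ_N intertwined by the links (P_{t,N} ∘ Λ_N^∞ = Λ_N^∞ ∘ P_t in the appropriate sense). If each P_{t,N}^* preserves C₀(Γ_N) and is strongly continuous at t = 0, then P_t^* preserves C₀(Q) and is strongly continuous at t = 0, i.e., the process on Q is Feller. -/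
open MeasureTheory ProbabilityTheory Filter

/-- A function is in `C₀`: continuous and vanishing at infinity. -/
def IsC0 {X : Type*} [TopologicalSpace X] (f : X → ℝ) : Prop :=
  Continuous f ∧ Tendsto f (cocompact X) (nhds 0)

/-- The action of a Markov kernel on functions, `(κ* f)(x) = ∫ f dκ(x)`. -/
noncomputable def kact {X Y : Type*} [MeasurableSpace X] [MeasurableSpace Y]
    (κ : Kernel X Y) (f : Y → ℝ) (x : X) : ℝ :=
  ∫ y, f y ∂ κ x


lemma isC0_bounded {X : Type*} [TopologicalSpace X] {f : X → ℝ} (hf : IsC0 f) :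
    ∃ C : ℝ, 0 ≤ C ∧ ∀ x, |f x| ≤ C := by
  obtain ⟨hc, ht⟩ := hf
  have h1 : ∀ᶠ x in cocompact X, |f x| < 1 := by
    have := ht (Metric.ball_mem_nhds 0 one_pos)
    filter_upwards [this] with x hx
    simpa [Real.dist_eq] using hx
  obtain ⟨K, hK, hKb⟩ := mem_cocompact.mp h1
  obtain ⟨C, hC⟩ := hK.exists_bound_of_continuousOn hc.continuousOn
  refine ⟨max C 1, le_max_of_le_right one_pos.le, fun x => ?_⟩
  by_cases hx : x ∈ K
  · exact le_max_of_le_left (by simpa [Real.norm_eq_abs] using hC x hx)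
  · exact le_max_of_le_right (le_of_lt (hKb hx))

lemma kact_integrable {Y : Type*} [MeasurableSpace Y] {μ : Measure Y} [IsFiniteMeasure μ]
    {f : Y → ℝ} {C : ℝ} (hm : Measurable f) (hb : ∀ y, |f y| ≤ C) : Integrable f μ :=
  (integrable_const C).mono' hm.aestronglyMeasurable (ae_of_all _ fun y => by
    simpa [Real.norm_eq_abs] using hb y)

lemma kact_bound {X Y : Type*} [MeasurableSpace X] [MeasurableSpace Y]
    (κ : Kernel X Y) [IsMarkovKernel κ] {f : Y → ℝ} {C : ℝ}
    (hb : ∀ y, |f y| ≤ C) (x : X) : |kact κ f x| ≤ C := by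
  have := norm_integral_le_of_norm_le_const (μ := κ x) (f := f) (C := C)
    (ae_of_all _ (fun y => by simpa [Real.norm_eq_abs] using hb y))
  simpa [kact, Real.norm_eq_abs, measure_univ] using this

lemma kact_contract {X Y : Type*} [MeasurableSpace X] [MeasurableSpace Y]
    (κ : Kernel X Y) [IsMarkovKernel κ] {g h : Y → ℝ} {Cg Ch ε : ℝ}
    (hgm : Measurable g) (hhm : Measurable h)
    (hgb : ∀ y, |g y| ≤ Cg) (hhb : ∀ y, |h y| ≤ Ch)
    (hce : ∀ y, |g y - h y| ≤ ε) (x : X) :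
    |kact κ g x - kact κ h x| ≤ ε := by
  have hig : Integrable g (κ x) := kact_integrable hgm hgb
  have hih : Integrable h (κ x) := kact_integrable hhm hhb
  have : kact κ g x - kact κ h x = ∫ y, (g y - h y) ∂ κ x := by
    rw [kact, kact, integral_sub hig hih]
  rw [this]
  have := norm_integral_le_of_norm_le_const (μ := κ x) (f := fun y => g y - h y) (C := ε)
    (ae_of_all _ (fun y => by simpa [Real.norm_eq_abs] using hce y))
  simpa [Real.norm_eq_abs, measure_univ] using this

lemma isC0_of_approx {X : Type*} [TopologicalSpace X] {F : X → ℝ}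
    (h : ∀ ε : ℝ, 0 < ε → ∃ g : X → ℝ, IsC0 g ∧ ∀ x, |F x - g x| ≤ ε) :
    IsC0 F := by
  choose g hg hgb using fun n : ℕ => h (1 / (n + 1)) (by positivity)
  have hu : TendstoUniformly g F atTop := by
    rw [Metric.tendstoUniformly_iff]
    intro ε hε
    obtain ⟨n₀, hn₀⟩ := exists_nat_one_div_lt hε
    filter_upwards [eventually_ge_atTop n₀] with n hn x
    rw [Real.dist_eq]
    calc |F x - g n x| ≤ 1 / (n + 1) := hgb n x
      _ ≤ 1 / (n₀ + 1) := by
          apply one_div_le_one_div_of_le (by positivity)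
          exact_mod_cast Nat.add_le_add_right hn 1
      _ < ε := hn₀
  constructor
  · exact hu.continuous (Frequently.of_forall fun n => (hg n).1)
  · rw [NormedAddCommGroup.tendsto_nhds_zero]
    intro ε hε
    obtain ⟨n, hn⟩ := exists_nat_one_div_lt (half_pos hε)
    have h2 : ∀ᶠ x in cocompact X, ‖g n x‖ < ε / 2 :=
      NormedAddCommGroup.tendsto_nhds_zero.mp (hg n).2 (ε / 2) (half_pos hε)
    filter_upwards [h2] with x hx
    rw [Real.norm_eq_abs]
    have : |F x| ≤ |F x - g n x| + |g n x| := by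
      calc |F x| = |(F x - g n x) + g n x| := by ring_nf
        _ ≤ |F x - g n x| + |g n x| := abs_add_le _ _
    have h3 : |g n x| < ε / 2 := by simpa [Real.norm_eq_abs] using hx
    have h4 : |F x - g n x| ≤ 1 / (n + 1) := hgb n x
    linarith

/-- Abstract Feller criterion: if a Markov semigroup `P_t` on a locally compact
metrizable space `Q` is intertwined with Feller semigroups `P_{t,N}` on countable
discrete spaces `Γ_N` via Feller Markov links `Λ_N : Q → M_p(Γ_N)` whose dual
ranges are jointly dense in `C₀(Q)`, and each `P_{t,N}^*` preserves `C₀(Γ_N)` and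
is strongly continuous at `t = 0`, then `P_t^*` preserves `C₀(Q)` and is strongly
continuous at `t = 0`, i.e. the process on `Q` is Feller. -/
theorem stmt19
    {Q : Type*} [TopologicalSpace Q] [LocallyCompactSpace Q]
    [TopologicalSpace.MetrizableSpace Q] [MeasurableSpace Q] [BorelSpace Q]
    (Γ : ℕ → Type*) [∀ N, Countable (Γ N)]
    [∀ N, TopologicalSpace (Γ N)] [∀ N, DiscreteTopology (Γ N)]
    [∀ N, MeasurableSpace (Γ N)] [∀ N, MeasurableSingletonClass (Γ N)]
    (P : ℝ → Kernel Q Q) (PN : ∀ N : ℕ, ℝ → Kernel (Γ N) (Γ N))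
    (Λ : ∀ N : ℕ, Kernel Q (Γ N))
    (hPmarkov : ∀ t : ℝ, 0 ≤ t → IsMarkovKernel (P t))
    (hPNmarkov : ∀ (N : ℕ) (t : ℝ), 0 ≤ t → IsMarkovKernel (PN N t))
    (hΛmarkov : ∀ N, IsMarkovKernel (Λ N))
    (hPsemi : ∀ s t : ℝ, 0 ≤ s → 0 ≤ t → (P s).comp (P t) = P (s + t))
    (hPNsemi : ∀ (N : ℕ) (s t : ℝ), 0 ≤ s → 0 ≤ t →
      (PN N s).comp (PN N t) = PN N (s + t))
    -- the links are Feller kernels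
    (hΛFeller : ∀ (N : ℕ) (f : Γ N → ℝ), IsC0 f → IsC0 (kact (Λ N) f))
    -- the union of the ranges of the dual link maps is dense in `C₀(Q)`
    (hdense : ∀ g : Q → ℝ, IsC0 g → ∀ ε : ℝ, 0 < ε →
      ∃ (N : ℕ) (f : Γ N → ℝ), IsC0 f ∧ ∀ x : Q, |kact (Λ N) f x - g x| ≤ ε)
    -- intertwining: `P_t^* ∘ Λ_N^* = Λ_N^* ∘ P_{t,N}^*` on `C₀(Γ_N)`
    (hcomm : ∀ (t : ℝ), 0 ≤ t → ∀ (N : ℕ) (f : Γ N → ℝ), IsC0 f →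
      kact (P t) (kact (Λ N) f) = kact (Λ N) (kact (PN N t) f))
    -- each `P_{t,N}^*` preserves `C₀(Γ_N)`
    (hPNFeller : ∀ (N : ℕ) (t : ℝ), 0 ≤ t → ∀ f : Γ N → ℝ, IsC0 f →
      IsC0 (kact (PN N t) f))
    -- strong continuity of `P_{t,N}^*` at `t = 0`
    (hPNcont : ∀ (N : ℕ) (f : Γ N → ℝ), IsC0 f → ∀ ε : ℝ, 0 < ε →
      ∃ δ : ℝ, 0 < δ ∧ ∀ t : ℝ, 0 ≤ t → t < δ →
        ∀ x : Γ N, |kact (PN N t) f x - f x| ≤ ε) :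
    (∀ t : ℝ, 0 ≤ t → ∀ g : Q → ℝ, IsC0 g → IsC0 (kact (P t) g)) ∧
      ∀ g : Q → ℝ, IsC0 g → ∀ ε : ℝ, 0 < ε →
        ∃ δ : ℝ, 0 < δ ∧ ∀ t : ℝ, 0 ≤ t → t < δ →
          ∀ x : Q, |kact (P t) g x - g x| ≤ ε := by
  constructor
  · intro t ht g hg
    haveI := hPmarkov t ht
    apply isC0_of_approx
    intro ε hε
    obtain ⟨N, f, hf, hfg⟩ := hdense g hg ε hε
    haveI := hΛmarkov N
    haveI := hPNmarkov N t ht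
    have hh : IsC0 (kact (Λ N) f) := hΛFeller N f hf
    refine ⟨kact (P t) (kact (Λ N) f), ?_, ?_⟩
    · rw [hcomm t ht N f hf]
      exact hΛFeller N _ (hPNFeller N t ht f hf)
    · intro x
      obtain ⟨Cg, _, hCg⟩ := isC0_bounded hg
      obtain ⟨Ch, _, hCh⟩ := isC0_bounded hh
      exact kact_contract (P t) hg.1.measurable hh.1.measurable hCg hCh
        (fun y => by rw [abs_sub_comm]; exact hfg y) x
  · intro g hg ε hε
    obtain ⟨N, f, hf, hfg⟩ := hdense g hg (ε / 3) (by positivity)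
    obtain ⟨δ, hδ, hδf⟩ := hPNcont N f hf (ε / 3) (by positivity)
    refine ⟨δ, hδ, fun t ht htδ x => ?_⟩
    haveI := hPmarkov t ht
    haveI := hΛmarkov N
    haveI := hPNmarkov N t ht
    have hh : IsC0 (kact (Λ N) f) := hΛFeller N f hf
    obtain ⟨Cg, _, hCg⟩ := isC0_bounded hg
    obtain ⟨Ch, _, hCh⟩ := isC0_bounded hh
    obtain ⟨Cf, _, hCf⟩ := isC0_bounded hf
    have h1 : |kact (P t) g x - kact (P t) (kact (Λ N) f) x| ≤ ε / 3 :=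
      kact_contract (P t) hg.1.measurable hh.1.measurable hCg hCh
        (fun y => by rw [abs_sub_comm]; exact hfg y) x
    have hPNfb : ∀ y, |kact (PN N t) f y| ≤ Cf := fun y => kact_bound _ hCf y
    have h3 : |kact (Λ N) (kact (PN N t) f) x - kact (Λ N) f x| ≤ ε / 3 :=
      kact_contract (Λ N) (measurable_of_countable _) (measurable_of_countable _)
        hPNfb hCf (fun y => hδf t ht htδ y) x
    have h2 : kact (P t) (kact (Λ N) f) = kact (Λ N) (kact (PN N t) f) :=
      hcomm t ht N f hf
    have h4 : |kact (Λ N) f x - g x| ≤ ε / 3 := hfg x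
    have h2' : |kact (P t) (kact (Λ N) f) x - kact (Λ N) f x| ≤ ε / 3 := by
      rw [h2]; exact h3
    calc |kact (P t) g x - g x|
        = |(kact (P t) g x - kact (P t) (kact (Λ N) f) x)
            + (kact (P t) (kact (Λ N) f) x - kact (Λ N) f x)
            + (kact (Λ N) f x - g x)| := by ring_nf
      _ ≤ |kact (P t) g x - kact (P t) (kact (Λ N) f) x|
            + |kact (P t) (kact (Λ N) f) x - kact (Λ N) f x|
            + |kact (Λ N) f x - g x| := abs_add_three _ _ _
      _ ≤ ε / 3 + ε / 3 + ε / 3 := by gcongr <;> assumption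
      _ = ε := by ring
end
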